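/- arXiv:2107.11944 — 3 statements merged into one kernel-verified Lean document; each statement's English description precedes it below -/
import Mathlib

section
/- Let E be a real Banach space, let M > 0 and λ > 0, and let S : [0,∞) → L(E) be a strongly continuous family of bounded linear operators on E satisfying ‖S(t)x‖_E ≤ M e^{−λt} ‖x‖_E for all t ≥ 0 and x ∈ E. Let 1 < p < ∞, let p' = p/(p−1), and let b ≥ 0 satisfy bp' > 1. Then there is a constant C, depending only on M, λ, p and b (in particular independent of T), such that for every T ∈ (0,∞) and every strongly measurable f : (0,T) → E with (∫_0^T (⟨t⟩^b ‖f(t)‖_E)^p dt)^{1/p} < ∞, the Duhamel integral u(t) := ∫_0^t S(t−s) f(s) ds is defined for almost every t ∈ (0,T) and satisfies (∫_0^T (⟨t⟩^b ‖u(t)‖_E)^p dt)^{1/p} ≤ C (∫_0^T (⟨t⟩^b ‖f(t)‖_E)^p dt)^{1/p}. -/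
open MeasureTheory Set
open scoped ENNReal NNReal

lemma sqrt_one_add_sq_le (r : ℝ) (hr : 0 ≤ r) : Real.sqrt (1 + r ^ 2) ≤ 1 + r := by
  have h : 1 + r ^ 2 ≤ (1 + r) ^ 2 := by nlinarith
  calc Real.sqrt (1 + r ^ 2) ≤ Real.sqrt ((1 + r) ^ 2) := Real.sqrt_le_sqrt h
  _ = 1 + r := Real.sqrt_sq (by linarith)

lemma peetre (s t : ℝ) :
    Real.sqrt (1 + t ^ 2) ≤ Real.sqrt 2 * (Real.sqrt (1 + (t - s) ^ 2) * Real.sqrt (1 + s ^ 2)) := by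
  rw [← Real.sqrt_mul (by positivity : (0:ℝ) ≤ 1 + (t - s)^2),
    ← Real.sqrt_mul (by norm_num : (0:ℝ) ≤ 2)]
  exact Real.sqrt_le_sqrt (by nlinarith [sq_nonneg (t - s - s), sq_nonneg ((t - s) * s)])

lemma one_add_le_exp_aux {d r : ℝ} (hd0 : 0 < d) (hd1 : d ≤ 1) (hr : 0 ≤ r) :
    1 + r ≤ d⁻¹ * Real.exp (d * r) := by
  have h := Real.add_one_le_exp (d * r)
  have h2 : d * (1 + r) ≤ Real.exp (d * r) := by nlinarith
  calc 1 + r = d⁻¹ * (d * (1 + r)) := by field_simp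
  _ ≤ d⁻¹ * Real.exp (d * r) := by
      exact mul_le_mul_of_nonneg_left h2 (by positivity)

/-- Key pointwise kernel bound. -/
lemma kernel_key (M lam b : ℝ) (hM : 0 < M) (hlam : 0 < lam) (hb : 0 ≤ b) :
    ∃ K > 0, ∀ s t : ℝ, 0 ≤ s → s ≤ t → ∀ c : ℝ, 0 ≤ c →
      Real.sqrt (1 + t ^ 2) ^ b * (M * Real.exp (-lam * (t - s)) * c)
        ≤ (K * Real.exp (-(lam / 2) * (t - s))) * (Real.sqrt (1 + s ^ 2) ^ b * c) := by
  set d : ℝ := min 1 ((lam / 2) / (b + 1)) with hd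
  have hd0 : 0 < d := lt_min one_pos (by positivity)
  have hd1 : d ≤ 1 := min_le_left _ _
  have hdb : d * b ≤ lam / 2 := by
    have h1 : d ≤ (lam / 2) / (b + 1) := min_le_right _ _
    have h2 : d * b ≤ ((lam / 2) / (b + 1)) * b := by
      exact mul_le_mul_of_nonneg_right h1 hb
    have h3 : ((lam / 2) / (b + 1)) * b ≤ lam / 2 := by
      rw [div_mul_eq_mul_div, div_le_iff₀ (by positivity)]
      nlinarith
    linarith
  refine ⟨M * Real.sqrt 2 ^ b * d⁻¹ ^ b, by positivity, ?_⟩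
  intro s t hs hst c hc
  set r := t - s with hr
  have hr0 : 0 ≤ r := by simp [hr]; linarith
  -- Peetre in rpow form
  have hpe : Real.sqrt (1 + t ^ 2) ^ b
      ≤ Real.sqrt 2 ^ b * (Real.sqrt (1 + r ^ 2) ^ b * Real.sqrt (1 + s ^ 2) ^ b) := by
    rw [← Real.mul_rpow (Real.sqrt_nonneg _) (Real.sqrt_nonneg _),
      ← Real.mul_rpow (Real.sqrt_nonneg _) (by positivity)]
    exact Real.rpow_le_rpow (Real.sqrt_nonneg _) (peetre s t) hb
  -- kernel bound : sqrt(1+r^2)^b * exp(-lam r) ≤ d⁻¹^b * exp(-(lam/2) r)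
  have hker : Real.sqrt (1 + r ^ 2) ^ b * Real.exp (-lam * r)
      ≤ d⁻¹ ^ b * Real.exp (-(lam / 2) * r) := by
    have h1 : Real.sqrt (1 + r ^ 2) ^ b ≤ (1 + r) ^ b :=
      Real.rpow_le_rpow (Real.sqrt_nonneg _) (sqrt_one_add_sq_le r hr0) hb
    have h2 : (1 + r) ^ b ≤ (d⁻¹ * Real.exp (d * r)) ^ b :=
      Real.rpow_le_rpow (by linarith) (one_add_le_exp_aux hd0 hd1 hr0) hb
    have h3 : (d⁻¹ * Real.exp (d * r)) ^ b = d⁻¹ ^ b * Real.exp (d * r * b) := by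
      rw [Real.mul_rpow (by positivity) (Real.exp_pos _).le,
        Real.rpow_def_of_pos (Real.exp_pos _), Real.log_exp]
    have h4 : Real.exp (d * r * b) * Real.exp (-lam * r) ≤ Real.exp (-(lam / 2) * r) := by
      rw [← Real.exp_add, Real.exp_le_exp]
      have : d * r * b = (d * b) * r := by ring
      rw [this]
      have := mul_le_mul_of_nonneg_right hdb hr0
      nlinarith
    calc Real.sqrt (1 + r ^ 2) ^ b * Real.exp (-lam * r)
        ≤ (d⁻¹ * Real.exp (d * r)) ^ b * Real.exp (-lam * r) := by
          exact mul_le_mul_of_nonneg_right (h1.trans h2) (Real.exp_pos _).le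
    _ = d⁻¹ ^ b * (Real.exp (d * r * b) * Real.exp (-lam * r)) := by rw [h3]; ring
    _ ≤ d⁻¹ ^ b * Real.exp (-(lam / 2) * r) := by
        exact mul_le_mul_of_nonneg_left h4 (by positivity)
  have hw : 0 ≤ Real.sqrt (1 + s ^ 2) ^ b := by positivity
  calc Real.sqrt (1 + t ^ 2) ^ b * (M * Real.exp (-lam * r) * c)
      ≤ (Real.sqrt 2 ^ b * (Real.sqrt (1 + r ^ 2) ^ b * Real.sqrt (1 + s ^ 2) ^ b))
        * (M * Real.exp (-lam * r) * c) := by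
        exact mul_le_mul_of_nonneg_right hpe (by positivity)
  _ = (M * Real.sqrt 2 ^ b) * ((Real.sqrt (1 + r ^ 2) ^ b * Real.exp (-lam * r)) *
        (Real.sqrt (1 + s ^ 2) ^ b * c)) := by ring
  _ ≤ (M * Real.sqrt 2 ^ b) * ((d⁻¹ ^ b * Real.exp (-(lam / 2) * r)) *
        (Real.sqrt (1 + s ^ 2) ^ b * c)) := by
        refine mul_le_mul_of_nonneg_left (mul_le_mul_of_nonneg_right hker (by positivity)) (by positivity)
  _ = (M * Real.sqrt 2 ^ b * d⁻¹ ^ b * Real.exp (-(lam / 2) * r)) * (Real.sqrt (1 + s ^ 2) ^ b * c) := by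
      ring

lemma Smax_continuous {E : Type*} [NormedAddCommGroup E] [NormedSpace ℝ E]
    (M lam : ℝ) (hM : 0 < M) (S : ℝ → E →L[ℝ] E)
    (hScont : ∀ x : E, ContinuousOn (fun t => S t x) (Set.Ici 0))
    (hSbound : ∀ t : ℝ, 0 ≤ t → ∀ x : E, ‖S t x‖ ≤ M * Real.exp (-lam * t) * ‖x‖)
    (hlam : 0 < lam) :
    Continuous (fun q : ℝ × E => S (max q.1 0) q.2) := by
  have hM' : ∀ (r : ℝ) (x : E), ‖S (max r 0) x‖ ≤ M * ‖x‖ := by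
    intro r x
    calc ‖S (max r 0) x‖ ≤ M * Real.exp (-lam * max r 0) * ‖x‖ :=
      hSbound _ (le_max_right _ _) x
    _ ≤ M * 1 * ‖x‖ := by
        gcongr
        exact Real.exp_le_one_iff.mpr (by nlinarith [le_max_right r (0:ℝ)])
    _ = M * ‖x‖ := by ring
  rw [continuous_iff_continuousAt]
  intro q₀
  have hSm : ∀ x : E, Continuous (fun r : ℝ => S (max r 0) x) := by
    intro x
    exact (hScont x).comp_continuous (continuous_id.max continuous_const)
      (fun r => Set.mem_Ici.mpr (le_max_right _ _))
  have h1 : Filter.Tendsto (fun q : ℝ × E => ‖S (max q.1 0) q.2 - S (max q₀.1 0) q₀.2‖)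
      (nhds q₀) (nhds 0) := by
    have hle : ∀ q : ℝ × E, ‖S (max q.1 0) q.2 - S (max q₀.1 0) q₀.2‖
        ≤ M * ‖q.2 - q₀.2‖ + ‖S (max q.1 0) q₀.2 - S (max q₀.1 0) q₀.2‖ := by
      intro q
      calc ‖S (max q.1 0) q.2 - S (max q₀.1 0) q₀.2‖
          ≤ ‖S (max q.1 0) q.2 - S (max q.1 0) q₀.2‖
            + ‖S (max q.1 0) q₀.2 - S (max q₀.1 0) q₀.2‖ :=
            norm_sub_le_norm_sub_add_norm_sub _ _ _
      _ ≤ M * ‖q.2 - q₀.2‖ + ‖S (max q.1 0) q₀.2 - S (max q₀.1 0) q₀.2‖ := by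
          have : S (max q.1 0) q.2 - S (max q.1 0) q₀.2 = S (max q.1 0) (q.2 - q₀.2) := by
            rw [map_sub]
          rw [this]
          exact add_le_add_left (hM' _ _) _
    apply squeeze_zero (fun q => norm_nonneg _) hle
    have t1 : Filter.Tendsto (fun q : ℝ × E => M * ‖q.2 - q₀.2‖) (nhds q₀) (nhds 0) := by
      have : Continuous (fun q : ℝ × E => M * ‖q.2 - q₀.2‖) := by fun_prop
      have h := this.tendsto q₀
      simpa using h
    have t2 : Filter.Tendsto (fun q : ℝ × E => ‖S (max q.1 0) q₀.2 - S (max q₀.1 0) q₀.2‖)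
        (nhds q₀) (nhds 0) := by
      have hc : Continuous (fun q : ℝ × E => ‖S (max q.1 0) q₀.2 - S (max q₀.1 0) q₀.2‖) :=
        (((hSm q₀.2).comp continuous_fst).sub continuous_const).norm
      have h := hc.tendsto q₀
      simpa using h
    simpa using t1.add t2
  rw [ContinuousAt, tendsto_iff_norm_sub_tendsto_zero]
  exact h1

/-- Weighted maximal-in-time estimate for the Duhamel integral associated with an
exponentially decaying strongly continuous operator family, with a constant
independent of the time horizon `T` (estimate (5.6) of the paper). -/
theorem stmt_0
    (E : Type*) [NormedAddCommGroup E] [NormedSpace ℝ E] [CompleteSpace E]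
    (M lam : ℝ) (hM : 0 < M) (hlam : 0 < lam)
    (S : ℝ → E →L[ℝ] E)
    (hScont : ∀ x : E, ContinuousOn (fun t => S t x) (Set.Ici 0))
    (hSbound : ∀ t : ℝ, 0 ≤ t → ∀ x : E, ‖S t x‖ ≤ M * Real.exp (-lam * t) * ‖x‖)
    (p : ℝ) (hp : 1 < p) (b : ℝ) (hb : 0 ≤ b)
    (hbp : 1 < b * (p / (p - 1))) :
    ∃ C > 0, ∀ T : ℝ, 0 < T → ∀ f : ℝ → E,
      AEStronglyMeasurable f (volume.restrict (Ioo 0 T)) →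
      IntegrableOn (fun t => (Real.sqrt (1 + t ^ 2) ^ b * ‖f t‖) ^ p) (Ioo 0 T) →
      (∀ᵐ t ∂(volume.restrict (Ioo 0 T)),
          IntegrableOn (fun s => S (t - s) (f s)) (Ioo 0 t)) ∧
      (∫ t in Ioo (0:ℝ) T,
          (Real.sqrt (1 + t ^ 2) ^ b * ‖∫ s in Ioo 0 t, S (t - s) (f s)‖) ^ p) ^ (1 / p)
        ≤ C * (∫ t in Ioo (0:ℝ) T,
            (Real.sqrt (1 + t ^ 2) ^ b * ‖f t‖) ^ p) ^ (1 / p) := by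
  classical
  obtain ⟨K, hK, hker⟩ := kernel_key M lam b hM hlam hb
  set g : ℝ → ℝ := fun r => K * Real.exp (-(lam / 2) * r) with hg_def
  have hg_pos : ∀ r, 0 < g r := fun r => mul_pos hK (Real.exp_pos _)
  have hg_cont : Continuous g := by fun_prop
  have hg_int : IntegrableOn g (Ioi (0:ℝ)) :=
    (exp_neg_integrableOn_Ioi 0 (show (0:ℝ) < lam/2 by positivity)).const_mul K
  set Al : ℝ≥0∞ := ∫⁻ r in Ioi (0:ℝ), ENNReal.ofReal (g r) with hAl_def
  have hAl_top : Al ≠ ⊤ := hg_int.lintegral_lt_top.ne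
  have hp0 : 0 < p := lt_trans one_pos hp
  have hp_nonneg : 0 ≤ p := hp0.le
  have hrpow_cont : Continuous fun y : ℝ => y ^ p := by
    fun_prop (disch := assumption)
  set q := p / (p - 1) with hq_def
  have hpq : p.HolderConjugate q := Real.HolderConjugate.conjExponent hp
  refine ⟨max Al.toReal 1, lt_of_lt_of_le one_pos (le_max_right _ _), ?_⟩
  intro T hT f hf_meas hf_int
  set μT := volume.restrict (Ioo (0:ℝ) T) with hμT
  haveI : IsFiniteMeasure μT := by
    constructor
    rw [hμT, Measure.restrict_apply_univ, Real.volume_Ioo]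
    exact ENNReal.ofReal_lt_top
  set f' := hf_meas.mk f with hf'_def
  have hf' : StronglyMeasurable f' := hf_meas.stronglyMeasurable_mk
  have hff' : f =ᵐ[μT] f' := hf_meas.ae_eq_mk
  set w : ℝ → ℝ := fun t => Real.sqrt (1 + t ^ 2) ^ b with hw_def
  have hw_cont : Continuous w := by
    apply Continuous.rpow_const
    · fun_prop
    · exact fun x => Or.inr hb
  have hw_one : ∀ t, 1 ≤ w t := fun t =>
    Real.one_le_rpow (Real.one_le_sqrt.mpr (by nlinarith [sq_nonneg t])) hb
  have hw_nonneg : ∀ t, 0 ≤ w t := fun t => le_trans zero_le_one (hw_one t)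
  set h : ℝ → ℝ := fun s => w s * ‖f' s‖ with hh_def
  have hh_sm : StronglyMeasurable h := hw_cont.stronglyMeasurable.mul hf'.norm
  have hh_nonneg : ∀ s, 0 ≤ h s := fun s => mul_nonneg (hw_nonneg s) (norm_nonneg _)
  have hhp_meas : Measurable fun s => h s ^ p := hrpow_cont.measurable.comp hh_sm.measurable
  have hf_intw : IntegrableOn (fun t => (w t * ‖f t‖) ^ p) (Ioo 0 T) := hf_int
  have hwfp_eq : (fun t => (w t * ‖f t‖) ^ p) =ᵐ[μT] fun t => h t ^ p := by
    filter_upwards [hff'] with t ht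
    rw [hh_def]
    simp only
    rw [ht]
  have hIp : Integrable (fun s => h s ^ p) μT := hf_intw.congr hwfp_eq
  have hh_int : Integrable h μT := by
    refine (hIp.add (integrable_const 1)).mono' hh_sm.aestronglyMeasurable
      (ae_of_all _ fun s => ?_)
    rw [Real.norm_of_nonneg (hh_nonneg s)]
    simp only [Pi.add_apply]
    rcases le_total (h s) 1 with hs1 | hs1
    · have h0 : 0 ≤ h s ^ p := Real.rpow_nonneg (hh_nonneg s) p
      linarith
    · have h2 : h s ^ (1:ℝ) ≤ h s ^ p := Real.rpow_le_rpow_of_exponent_le hs1 hp.le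
      rw [Real.rpow_one] at h2
      linarith
  have hf'_int : Integrable f' μT := by
    refine hh_int.mono' hf'.aestronglyMeasurable (ae_of_all _ fun s => ?_)
    exact le_mul_of_one_le_left (norm_nonneg _) (hw_one s)
  have hf_intT : Integrable f μT := hf'_int.congr hff'.symm
  have hFmax := Smax_continuous M lam hM S hScont hSbound hlam
  have hsub : ∀ t : ℝ, t ≤ T → Ioo (0:ℝ) t ⊆ Ioo 0 T := fun t htT x hx =>
    ⟨hx.1, lt_of_lt_of_le hx.2 htT⟩
  have hff't : ∀ t : ℝ, t ≤ T → f =ᵐ[volume.restrict (Ioo 0 t)] f' := fun t htT =>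
    ae_restrict_of_ae_restrict_of_subset (hsub t htT) hff'
  have hmeas_t : ∀ t : ℝ, 0 < t → t ≤ T →
      AEStronglyMeasurable (fun s => S (t - s) (f s)) (volume.restrict (Ioo 0 t)) := by
    intro t ht0 htT
    have hsm : StronglyMeasurable (fun s : ℝ => S (max (t - s) 0) (f' s)) :=
      hFmax.comp_stronglyMeasurable
        (((measurable_const.sub measurable_id).stronglyMeasurable).prodMk hf')
    refine hsm.aestronglyMeasurable.congr ?_
    filter_upwards [hff't t htT, ae_restrict_mem measurableSet_Ioo] with s hsf hs
    have hmax : max (t - s) 0 = t - s := max_eq_left (by linarith [hs.2])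
    rw [hmax, hsf]
  have hint_t : ∀ t : ℝ, 0 < t → t ≤ T →
      IntegrableOn (fun s => S (t - s) (f s)) (Ioo 0 t) := by
    intro t ht0 htT
    have hfT : IntegrableOn f (Ioo 0 T) := hf_intT
    have hfi : IntegrableOn f (Ioo 0 t) := hfT.mono_set (hsub t htT)
    refine (hfi.norm.const_mul M).mono' (hmeas_t t ht0 htT) ?_
    filter_upwards [ae_restrict_mem measurableSet_Ioo] with s hs
    calc ‖S (t - s) (f s)‖ ≤ M * Real.exp (-lam * (t - s)) * ‖f s‖ :=
      hSbound _ (by linarith [hs.2]) _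
    _ ≤ M * ‖f s‖ := by
        rw [mul_assoc]
        refine mul_le_mul_of_nonneg_left ?_ hM.le
        refine mul_le_of_le_one_left (norm_nonneg _) ?_
        exact Real.exp_le_one_iff.mpr (by nlinarith [hs.1, hs.2])
  constructor
  · filter_upwards [ae_restrict_mem measurableSet_Ioo] with t ht
    exact hint_t t ht.1 ht.2.le

  -- the Duhamel integral
  set u : ℝ → E := fun t => ∫ s in Ioo 0 t, S (t - s) (f s) with hu_def
  have hGh_int : ∀ t : ℝ, 0 < t → t ≤ T →
      IntegrableOn (fun s => g (t - s) * h s) (Ioo 0 t) := by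
    intro t ht0 htT
    have hhT : IntegrableOn h (Ioo 0 T) := hh_int
    have hhi : IntegrableOn h (Ioo 0 t) := hhT.mono_set (hsub t htT)
    refine (hhi.const_mul K).mono' ?_ ?_
    · exact ((hg_cont.comp (continuous_const.sub continuous_id)).stronglyMeasurable.mul
        hh_sm).aestronglyMeasurable
    · filter_upwards [ae_restrict_mem measurableSet_Ioo] with s hs
      rw [Real.norm_of_nonneg (mul_nonneg (hg_pos _).le (hh_nonneg s))]
      refine mul_le_mul_of_nonneg_right ?_ (hh_nonneg s)
      have he : Real.exp (-(lam/2) * (t - s)) ≤ 1 :=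
        Real.exp_le_one_iff.mpr (by nlinarith [hs.1, hs.2, hlam])
      calc g (t - s) = K * Real.exp (-(lam/2) * (t - s)) := rfl
      _ ≤ K * 1 := mul_le_mul_of_nonneg_left he hK.le
      _ = K := mul_one K
  have hC : ∀ t : ℝ, 0 < t → t ≤ T →
      w t * ‖u t‖ ≤ ∫ s in Ioo 0 t, g (t - s) * h s := by
    intro t ht0 htT
    calc w t * ‖u t‖ ≤ w t * ∫ s in Ioo 0 t, ‖S (t - s) (f s)‖ :=
      mul_le_mul_of_nonneg_left (norm_integral_le_integral_norm _) (hw_nonneg t)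
    _ = ∫ s in Ioo 0 t, w t * ‖S (t - s) (f s)‖ := (integral_const_mul _ _).symm
    _ ≤ ∫ s in Ioo 0 t, g (t - s) * h s := by
        refine integral_mono_of_nonneg ?_ (hGh_int t ht0 htT) ?_
        · exact ae_of_all _ fun s => mul_nonneg (hw_nonneg t) (norm_nonneg _)
        · filter_upwards [hff't t htT, ae_restrict_mem measurableSet_Ioo] with s hsf hs
          calc w t * ‖S (t - s) (f s)‖
              ≤ w t * (M * Real.exp (-lam * (t - s)) * ‖f s‖) :=
            mul_le_mul_of_nonneg_left (hSbound _ (by linarith [hs.2]) _) (hw_nonneg t)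
          _ ≤ (K * Real.exp (-(lam/2) * (t - s))) * (w s * ‖f s‖) :=
            hker s t hs.1.le hs.2.le _ (norm_nonneg _)
          _ = g (t - s) * h s := by rw [hh_def]; simp only; rw [hsf]
  -- lintegral quantities
  set I : ℝ≥0∞ := ∫⁻ s in Ioo (0:ℝ) T, ENNReal.ofReal (h s ^ p) with hI_def
  set L : ℝ≥0∞ := ∫⁻ t in Ioo (0:ℝ) T, ENNReal.ofReal ((w t * ‖u t‖) ^ p) with hL_def
  have hq1 : 1 < q := hpq.symm.lt
  have hq0 : q ≠ 0 := hpq.symm.pos.ne'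
  -- per-t Hölder bound
  have hD1 : ∀ t : ℝ, 0 < t → t ≤ T →
      ENNReal.ofReal ((w t * ‖u t‖) ^ p) ≤
        Al ^ (p - 1) *
          ∫⁻ s in Ioo 0 t, ENNReal.ofReal (g (t - s)) * ENNReal.ofReal (h s ^ p) := by
    intro t ht0 htT
    have hJ_nonneg : 0 ≤ ∫ s in Ioo 0 t, g (t - s) * h s :=
      integral_nonneg fun s => mul_nonneg (hg_pos _).le (hh_nonneg s)
    have step1 : ENNReal.ofReal ((w t * ‖u t‖) ^ p)
        ≤ (ENNReal.ofReal (∫ s in Ioo 0 t, g (t - s) * h s)) ^ p := by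
      rw [ENNReal.ofReal_rpow_of_nonneg hJ_nonneg hp_nonneg]
      exact ENNReal.ofReal_le_ofReal
        (Real.rpow_le_rpow (mul_nonneg (hw_nonneg t) (norm_nonneg _)) (hC t ht0 htT) hp_nonneg)
    have step2 : ENNReal.ofReal (∫ s in Ioo 0 t, g (t - s) * h s)
        = ∫⁻ s in Ioo 0 t, ENNReal.ofReal (g (t - s)) * ENNReal.ofReal (h s) := by
      rw [ofReal_integral_eq_lintegral_ofReal (hGh_int t ht0 htT)
        (ae_of_all _ fun s => mul_nonneg (hg_pos _).le (hh_nonneg s))]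
      exact lintegral_congr fun s => ENNReal.ofReal_mul (hg_pos _).le
    have hGg_meas : Measurable fun s : ℝ => ENNReal.ofReal (g (t - s)) :=
      ENNReal.measurable_ofReal.comp
        (hg_cont.comp (continuous_const.sub continuous_id)).measurable
    have hGh_meas : Measurable fun s : ℝ => ENNReal.ofReal (h s) :=
      ENNReal.measurable_ofReal.comp hh_sm.measurable
    have hGg_ne_zero : ∀ s : ℝ, ENNReal.ofReal (g (t - s)) ≠ 0 :=
      fun s => (ENNReal.ofReal_pos.mpr (hg_pos _)).ne'
    have hsplit : (fun s : ℝ => ENNReal.ofReal (g (t - s)) * ENNReal.ofReal (h s))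
        = fun s => (ENNReal.ofReal (g (t - s)) ^ (1/q)) *
            ((ENNReal.ofReal (g (t - s)) ^ (1/p)) * ENNReal.ofReal (h s)) := by
      funext s
      rw [← mul_assoc, ← ENNReal.rpow_add _ _ (hGg_ne_zero s) ENNReal.ofReal_ne_top]
      have : 1/q + 1/p = 1 := by
        rw [one_div, one_div, add_comm]; exact hpq.inv_add_inv_eq_one
      rw [this, ENNReal.rpow_one]
    have hH := ENNReal.lintegral_mul_le_Lp_mul_Lq (volume.restrict (Ioo 0 t)) hpq.symm
      (f := fun s => ENNReal.ofReal (g (t - s)) ^ (1/q))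
      (g := fun s => (ENNReal.ofReal (g (t - s)) ^ (1/p)) * ENNReal.ofReal (h s))
      ((hGg_meas.pow_const _).aemeasurable)
      (((hGg_meas.pow_const _).mul hGh_meas).aemeasurable)
    -- simplify the three lintegrals in hH
    have e1 : (∫⁻ s in Ioo 0 t, (ENNReal.ofReal (g (t - s)) ^ (1/q)) ^ q)
        = ∫⁻ s in Ioo 0 t, ENNReal.ofReal (g (t - s)) := by
      refine lintegral_congr fun s => ?_
      rw [← ENNReal.rpow_mul, one_div, inv_mul_cancel₀ hq0, ENNReal.rpow_one]
    have e2 : (∫⁻ s in Ioo 0 t, ((ENNReal.ofReal (g (t - s)) ^ (1/p)) * ENNReal.ofReal (h s)) ^ p)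
        = ∫⁻ s in Ioo 0 t, ENNReal.ofReal (g (t - s)) * ENNReal.ofReal (h s ^ p) := by
      refine lintegral_congr fun s => ?_
      rw [ENNReal.mul_rpow_of_nonneg _ _ hp_nonneg, ← ENNReal.rpow_mul, one_div,
        inv_mul_cancel₀ hp0.ne', ENNReal.rpow_one,
        ENNReal.ofReal_rpow_of_nonneg (hh_nonneg s) hp_nonneg]
    have hGgA : (∫⁻ s in Ioo 0 t, ENNReal.ofReal (g (t - s))) ≤ Al := by
      have hmp := Measure.measurePreserving_sub_left (volume : Measure ℝ) t
      have hemb : MeasurableEmbedding (fun x : ℝ => t - x) :=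
        (MeasurableEquiv.subLeft t).measurableEmbedding
      have heq := hmp.setLIntegral_comp_preimage_emb hemb
        (fun r => ENNReal.ofReal (g r)) (Ioo 0 t)
      have hpre : (fun x : ℝ => t - x) ⁻¹' Ioo 0 t = Ioo 0 t := by
        ext x
        simp only [mem_preimage, mem_Ioo]
        constructor <;> (rintro ⟨h1, h2⟩; constructor <;> linarith)
      rw [hpre] at heq
      calc (∫⁻ s in Ioo 0 t, ENNReal.ofReal (g (t - s)))
          = ∫⁻ r in Ioo 0 t, ENNReal.ofReal (g r) := heq
      _ ≤ Al := by rw [hAl_def]; exact lintegral_mono_set (fun x hx => hx.1)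
    calc ENNReal.ofReal ((w t * ‖u t‖) ^ p)
        ≤ (ENNReal.ofReal (∫ s in Ioo 0 t, g (t - s) * h s)) ^ p := step1
    _ = (∫⁻ s in Ioo 0 t, ENNReal.ofReal (g (t - s)) * ENNReal.ofReal (h s)) ^ p := by
        rw [step2]
    _ ≤ ((∫⁻ s in Ioo 0 t, ENNReal.ofReal (g (t - s))) ^ (1/q) *
          (∫⁻ s in Ioo 0 t, ENNReal.ofReal (g (t - s)) * ENNReal.ofReal (h s ^ p)) ^ (1/p)) ^ p := by
        refine ENNReal.rpow_le_rpow ?_ hp_nonneg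
        rw [hsplit]
        have hH' := hH
        simp only [Pi.mul_apply] at hH'
        rw [e1, e2] at hH'
        exact hH'
    _ ≤ (Al ^ (1/q) *
          (∫⁻ s in Ioo 0 t, ENNReal.ofReal (g (t - s)) * ENNReal.ofReal (h s ^ p)) ^ (1/p)) ^ p := by
        refine ENNReal.rpow_le_rpow ?_ hp_nonneg
        exact mul_le_mul_left (ENNReal.rpow_le_rpow hGgA (by positivity)) _
    _ = Al ^ (p - 1) *
          ∫⁻ s in Ioo 0 t, ENNReal.ofReal (g (t - s)) * ENNReal.ofReal (h s ^ p) := by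
        rw [ENNReal.mul_rpow_of_nonneg _ _ hp_nonneg, ← ENNReal.rpow_mul, ← ENNReal.rpow_mul,
          one_div, one_div]
        have hqp : q⁻¹ * p = p - 1 := by
          rw [hq_def]
          rw [inv_div]
          field_simp
        have hpp : p⁻¹ * p = 1 := inv_mul_cancel₀ hp0.ne'
        rw [hqp, hpp, ENNReal.rpow_one]
  -- integrate in t and pull out the constant
  have hL1 : L ≤ Al ^ (p - 1) * ∫⁻ t in Ioo (0:ℝ) T,
      ∫⁻ s in Ioo 0 t, ENNReal.ofReal (g (t - s)) * ENNReal.ofReal (h s ^ p) := by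
    rw [hL_def, ← lintegral_const_mul' _ _
      (ENNReal.rpow_ne_top_of_nonneg (by linarith) hAl_top)]
    refine lintegral_mono_ae ?_
    filter_upwards [ae_restrict_mem measurableSet_Ioo] with t ht
    exact hD1 t ht.1 ht.2.le
  -- Fubini / Tonelli step
  have hD2 : (∫⁻ t in Ioo (0:ℝ) T,
      ∫⁻ s in Ioo 0 t, ENNReal.ofReal (g (t - s)) * ENNReal.ofReal (h s ^ p)) ≤ Al * I := by
    have hin : ∀ t ∈ Ioo (0:ℝ) T,
        (∫⁻ s in Ioo 0 t, ENNReal.ofReal (g (t - s)) * ENNReal.ofReal (h s ^ p))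
        = ∫⁻ s in Ioo (0:ℝ) T, (Ioo (0:ℝ) t).indicator
            (fun s => ENNReal.ofReal (g (t - s)) * ENNReal.ofReal (h s ^ p)) s := by
      intro t ht
      rw [← lintegral_indicator measurableSet_Ioo, ← lintegral_indicator measurableSet_Ioo,
        Set.indicator_indicator, Set.inter_eq_self_of_subset_right (hsub t ht.2.le)]
    rw [setLIntegral_congr_fun measurableSet_Ioo hin]
    have hfun_eq : (Function.uncurry fun t s => (Ioo (0:ℝ) t).indicator
          (fun s' => ENNReal.ofReal (g (t - s')) * ENNReal.ofReal (h s' ^ p)) s)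
        = {z : ℝ × ℝ | 0 < z.2 ∧ z.2 < z.1}.indicator
            (fun z => ENNReal.ofReal (g (z.1 - z.2)) * ENNReal.ofReal (h z.2 ^ p)) := by
      funext z
      rcases z with ⟨t, s⟩
      by_cases hz : s ∈ Ioo (0:ℝ) t
      · rw [Function.uncurry_apply_pair, Set.indicator_of_mem hz,
          Set.indicator_of_mem (by exact hz : ((t, s) : ℝ × ℝ) ∈ {z : ℝ × ℝ | 0 < z.2 ∧ z.2 < z.1})]
      · rw [Function.uncurry_apply_pair, Set.indicator_of_notMem hz,
          Set.indicator_of_notMem (by exact hz : ((t, s) : ℝ × ℝ) ∉ {z : ℝ × ℝ | 0 < z.2 ∧ z.2 < z.1})]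
    have hmeas_prod : AEMeasurable (Function.uncurry fun t s => (Ioo (0:ℝ) t).indicator
        (fun s' => ENNReal.ofReal (g (t - s')) * ENNReal.ofReal (h s' ^ p)) s) (μT.prod μT) := by
      rw [hfun_eq]
      refine (Measurable.indicator ?_ ?_).aemeasurable
      · exact (ENNReal.measurable_ofReal.comp
          (hg_cont.measurable.comp (measurable_fst.sub measurable_snd))).mul
          (ENNReal.measurable_ofReal.comp (hhp_meas.comp measurable_snd))
      · exact (measurableSet_lt measurable_const measurable_snd).inter
          (measurableSet_lt measurable_snd measurable_fst)
    rw [lintegral_lintegral_swap hmeas_prod]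
    have hinner : ∀ s ∈ Ioo (0:ℝ) T,
        (∫⁻ t in Ioo (0:ℝ) T, (Ioo (0:ℝ) t).indicator
          (fun s' => ENNReal.ofReal (g (t - s')) * ENNReal.ofReal (h s' ^ p)) s)
          ≤ Al * ENNReal.ofReal (h s ^ p) := by
      intro s hs
      have hb1 : ∀ t : ℝ, (Ioo (0:ℝ) t).indicator
          (fun s' => ENNReal.ofReal (g (t - s')) * ENNReal.ofReal (h s' ^ p)) s
          ≤ (Ioi s).indicator (fun t' => ENNReal.ofReal (g (t' - s))) t * ENNReal.ofReal (h s ^ p) := by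
        intro t
        by_cases hst : s ∈ Ioo (0:ℝ) t
        · rw [Set.indicator_of_mem hst, Set.indicator_of_mem (mem_Ioi.mpr hst.2)]
        · rw [Set.indicator_of_notMem hst]
          exact zero_le
      calc (∫⁻ t in Ioo (0:ℝ) T, (Ioo (0:ℝ) t).indicator
            (fun s' => ENNReal.ofReal (g (t - s')) * ENNReal.ofReal (h s' ^ p)) s)
          ≤ ∫⁻ t in Ioo (0:ℝ) T,
            (Ioi s).indicator (fun t' => ENNReal.ofReal (g (t' - s))) t * ENNReal.ofReal (h s ^ p) :=
          lintegral_mono fun t => hb1 t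
      _ = (∫⁻ t in Ioo (0:ℝ) T, (Ioi s).indicator (fun t' => ENNReal.ofReal (g (t' - s))) t)
            * ENNReal.ofReal (h s ^ p) := lintegral_mul_const' _ _ ENNReal.ofReal_ne_top
      _ ≤ (∫⁻ t, (Ioi s).indicator (fun t' => ENNReal.ofReal (g (t' - s))) t)
            * ENNReal.ofReal (h s ^ p) :=
          mul_le_mul_left (setLIntegral_le_lintegral _ _) _
      _ = (∫⁻ t in Ioi s, ENNReal.ofReal (g (t - s))) * ENNReal.ofReal (h s ^ p) := by
          rw [lintegral_indicator measurableSet_Ioi]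
      _ = Al * ENNReal.ofReal (h s ^ p) := by
          congr 1
          have hmp := measurePreserving_sub_right (volume : Measure ℝ) s
          have hemb : MeasurableEmbedding (fun x : ℝ => x - s) :=
            (MeasurableEquiv.subRight s).measurableEmbedding
          have heq := hmp.setLIntegral_comp_preimage_emb hemb
            (fun r => ENNReal.ofReal (g r)) (Ioi 0)
          have hpre : (fun x : ℝ => x - s) ⁻¹' Ioi 0 = Ioi s := by
            ext x
            simp only [mem_preimage, mem_Ioi]
            constructor <;> intro hx <;> linarith
          rw [hpre] at heq
          rw [heq, hAl_def]
    calc (∫⁻ s in Ioo (0:ℝ) T, ∫⁻ t in Ioo (0:ℝ) T, (Ioo (0:ℝ) t).indicator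
          (fun s' => ENNReal.ofReal (g (t - s')) * ENNReal.ofReal (h s' ^ p)) s)
        ≤ ∫⁻ s in Ioo (0:ℝ) T, Al * ENNReal.ofReal (h s ^ p) := by
          refine lintegral_mono_ae ?_
          filter_upwards [ae_restrict_mem measurableSet_Ioo] with s hs
          exact hinner s hs
    _ = Al * I := by rw [lintegral_const_mul' _ _ hAl_top, hI_def]
  -- measurability of the Duhamel integral in t
  have hu_meas : AEStronglyMeasurable u μT := by
    have hK_sm : StronglyMeasurable fun z : ℝ × ℝ =>
        ({z : ℝ × ℝ | 0 < z.2 ∧ z.2 < z.1}.indicator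
          (fun z => S (max (z.1 - z.2) 0) (f' z.2))) z := by
      refine StronglyMeasurable.indicator ?_ ?_
      · exact hFmax.comp_stronglyMeasurable
          (((measurable_fst.sub measurable_snd).stronglyMeasurable).prodMk
            (hf'.comp_measurable measurable_snd))
      · exact (measurableSet_lt measurable_const measurable_snd).inter
          (measurableSet_lt measurable_snd measurable_fst)
    have hmain : AEStronglyMeasurable (fun t => ∫ s,
        ({z : ℝ × ℝ | 0 < z.2 ∧ z.2 < z.1}.indicator
          (fun z => S (max (z.1 - z.2) 0) (f' z.2))) (t, s) ∂μT) μT :=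
      hK_sm.aestronglyMeasurable.integral_prod_right'
    refine hmain.congr ?_
    filter_upwards [ae_restrict_mem measurableSet_Ioo] with t ht
    have e1 : (fun s : ℝ => ({z : ℝ × ℝ | 0 < z.2 ∧ z.2 < z.1}.indicator
        (fun z => S (max (z.1 - z.2) 0) (f' z.2))) (t, s))
        = (Ioo (0:ℝ) t).indicator (fun s => S (max (t - s) 0) (f' s)) := by
      funext s
      by_cases hs : s ∈ Ioo (0:ℝ) t
      · rw [Set.indicator_of_mem
          (show ((t,s) : ℝ × ℝ) ∈ {z : ℝ × ℝ | 0 < z.2 ∧ z.2 < z.1} from ⟨hs.1, hs.2⟩),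
          Set.indicator_of_mem hs]
      · rw [Set.indicator_of_notMem
          (show ((t,s) : ℝ × ℝ) ∉ {z : ℝ × ℝ | 0 < z.2 ∧ z.2 < z.1} from by
            simpa [mem_Ioo] using hs),
          Set.indicator_of_notMem hs]
    rw [e1, integral_indicator measurableSet_Ioo, hμT,
      Measure.restrict_restrict measurableSet_Ioo,
      Set.inter_eq_self_of_subset_left (hsub t ht.2.le)]
    refine integral_congr_ae ?_
    filter_upwards [hff't t ht.2.le, ae_restrict_mem measurableSet_Ioo] with s hsf hs
    rw [max_eq_left (by linarith [hs.2] : (0:ℝ) ≤ t - s), hsf]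
  -- convert to real integrals
  have hwu_nonneg : ∀ t : ℝ, 0 ≤ (w t * ‖u t‖) ^ p :=
    fun t => Real.rpow_nonneg (mul_nonneg (hw_nonneg t) (norm_nonneg _)) p
  have hwf_nonneg : ∀ t : ℝ, 0 ≤ (w t * ‖f t‖) ^ p :=
    fun t => Real.rpow_nonneg (mul_nonneg (hw_nonneg t) (norm_nonneg _)) p
  have hR_nonneg : 0 ≤ ∫ t in Ioo (0:ℝ) T, (w t * ‖f t‖) ^ p :=
    integral_nonneg fun t => hwf_nonneg t
  have hI_eq : ENNReal.ofReal (∫ t in Ioo (0:ℝ) T, (w t * ‖f t‖) ^ p) = I := by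
    rw [ofReal_integral_eq_lintegral_ofReal hf_intw (ae_of_all _ hwf_nonneg), hI_def]
    refine lintegral_congr_ae ?_
    filter_upwards [hff'] with t ht
    rw [hh_def]
    simp only
    rw [ht]
  have hI_top : I ≠ ⊤ := by rw [← hI_eq]; exact ENNReal.ofReal_ne_top
  have hu_norm_meas : AEStronglyMeasurable (fun t => (w t * ‖u t‖) ^ p) μT := by
    have h1 : AEMeasurable (fun t => w t * ‖u t‖) μT :=
      hw_cont.aemeasurable.mul hu_meas.norm.aemeasurable
    exact (hrpow_cont.measurable.comp_aemeasurable h1).aestronglyMeasurable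
  have hL_eq : ∫ t in Ioo (0:ℝ) T, (w t * ‖u t‖) ^ p = L.toReal := by
    rw [integral_eq_lintegral_of_nonneg_ae (ae_of_all _ hwu_nonneg) hu_norm_meas, hL_def]
  have hmain2 : L ≤ Al ^ p * I := by
    calc L ≤ Al ^ (p - 1) * (Al * I) := le_trans hL1 (mul_le_mul_right hD2 _)
    _ = Al ^ p * I := by
        rw [← mul_assoc]
        congr 1
        have hx := (ENNReal.rpow_add_of_nonneg (x := Al) (p - 1) 1 (by linarith) zero_le_one).symm
        rw [ENNReal.rpow_one] at hx
        rw [hx, sub_add_cancel]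
  have hfinal : ∫ t in Ioo (0:ℝ) T, (w t * ‖u t‖) ^ p
      ≤ Al.toReal ^ p * ∫ t in Ioo (0:ℝ) T, (w t * ‖f t‖) ^ p := by
    rw [hL_eq]
    have h1 : L.toReal ≤ (Al ^ p * I).toReal :=
      ENNReal.toReal_mono
        (ENNReal.mul_ne_top (ENNReal.rpow_ne_top_of_nonneg hp_nonneg hAl_top) hI_top) hmain2
    rw [ENNReal.toReal_mul, ← ENNReal.toReal_rpow] at h1
    rw [← hI_eq, ENNReal.toReal_ofReal hR_nonneg] at h1
    exact h1
  have hLHS_nonneg : 0 ≤ ∫ t in Ioo (0:ℝ) T, (w t * ‖u t‖) ^ p :=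
    integral_nonneg fun t => hwu_nonneg t
  have hgoal : (∫ t in Ioo (0:ℝ) T, (w t * ‖u t‖) ^ p) ^ (1/p)
      ≤ max Al.toReal 1 * (∫ t in Ioo (0:ℝ) T, (w t * ‖f t‖) ^ p) ^ (1/p) := by
    calc (∫ t in Ioo (0:ℝ) T, (w t * ‖u t‖) ^ p) ^ (1/p)
        ≤ (Al.toReal ^ p * ∫ t in Ioo (0:ℝ) T, (w t * ‖f t‖) ^ p) ^ (1/p) :=
        Real.rpow_le_rpow hLHS_nonneg hfinal (by positivity)
    _ = Al.toReal * (∫ t in Ioo (0:ℝ) T, (w t * ‖f t‖) ^ p) ^ (1/p) := by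
        rw [Real.mul_rpow (by positivity) hR_nonneg, ← Real.rpow_mul ENNReal.toReal_nonneg,
          mul_one_div_cancel hp0.ne', Real.rpow_one]
    _ ≤ max Al.toReal 1 * (∫ t in Ioo (0:ℝ) T, (w t * ‖f t‖) ^ p) ^ (1/p) :=
        mul_le_mul_of_nonneg_right (le_max_left _ _) (Real.rpow_nonneg hR_nonneg _)
  simpa only [hw_def, hu_def] using hgoal
end

section
/- Let λ > 0, 1 < p < ∞, and b ≥ 0. There is a constant C = C(λ, p, b) such that for every measurable h : ℝ → ℝ with (∫_ℝ (⟨t⟩^b |h(t)|)^p dt)^{1/p} < ∞, the function g(t) := ∫_{−∞}^t e^{−λ(t−s)} h(s) ds is defined for every t ∈ ℝ, is locally absolutely continuous, solves g'(t) + λ g(t) = h(t) for almost every t ∈ ℝ, and satisfies (∫_ℝ (⟨t⟩^b |g(t)|)^p dt)^{1/p} + (∫_ℝ (⟨t⟩^b |g'(t)|)^p dt)^{1/p} ≤ C (∫_ℝ (⟨t⟩^b |h(t)|)^p dt)^{1/p}. -/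
open MeasureTheory Set

namespace Stmt1Aux
open MeasureTheory.Measure Real

noncomputable def w (b t : ℝ) : ℝ := Real.sqrt (1 + t ^ 2) ^ b

lemma w_nonneg (b t : ℝ) : 0 ≤ w b t := Real.rpow_nonneg (Real.sqrt_nonneg _) _

lemma one_le_sqrt_one_add_sq (t : ℝ) : 1 ≤ Real.sqrt (1 + t ^ 2) := by
  have h := Real.sqrt_le_sqrt (show (1:ℝ) ≤ 1 + t ^ 2 by nlinarith)
  simpa using h

lemma one_le_w {b : ℝ} (hb : 0 ≤ b) (t : ℝ) : 1 ≤ w b t :=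
  Real.one_le_rpow (one_le_sqrt_one_add_sq t) hb

lemma peetre {b : ℝ} (hb : 0 ≤ b) (t s : ℝ) :
    w b t ≤ Real.sqrt 2 ^ b * (w b (t - s) * w b s) := by
  simp only [w]
  rw [← Real.mul_rpow (Real.sqrt_nonneg _) (Real.sqrt_nonneg _),
    ← Real.mul_rpow (Real.sqrt_nonneg _) (by positivity)]
  apply Real.rpow_le_rpow (Real.sqrt_nonneg _) _ hb
  rw [← Real.sqrt_mul (by positivity : (0:ℝ) ≤ 1 + (t-s)^2),
    ← Real.sqrt_mul (by norm_num : (0:ℝ) ≤ 2)]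
  exact Real.sqrt_le_sqrt (by nlinarith [sq_nonneg (t - 2*s), sq_nonneg (s*(t-s))])

lemma exp_integrableOn_Iio {r : ℝ} (hr : 0 < r) (t : ℝ) :
    IntegrableOn (fun s => Real.exp (-r * (t - s))) (Iio t) := by
  have h1 : Integrable ((Iic (r * t)).indicator Real.exp) volume :=
    (integrableOn_exp_Iic (r * t)).integrable_indicator measurableSet_Iic
  have h3 : IntegrableOn (fun s => (Iic (r * t)).indicator Real.exp (r * s)) (Iio t) :=
    (h1.comp_mul_left' hr.ne').integrableOn
  have h4 : IntegrableOn (fun s => Real.exp (r * s)) (Iio t) := by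
    apply h3.congr_fun _ measurableSet_Iio
    intro s hs
    exact Set.indicator_of_mem (mem_Iic.2 (by nlinarith [mem_Iio.1 hs])) Real.exp
  apply IntegrableOn.congr_fun (h4.const_mul (Real.exp (-r * t))) _ measurableSet_Iio
  intro s _
  simp only [← Real.exp_add]
  ring_nf

noncomputable def K (lam b u : ℝ) : ℝ := Real.exp (-lam * u) * w b u

lemma K_nonneg (lam b u : ℝ) : 0 ≤ K lam b u :=
  mul_nonneg (Real.exp_nonneg _) (w_nonneg b u)

lemma w_le_aux {b : ℝ} (hb : 0 ≤ b) {u : ℝ} (hu : 0 ≤ u) :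
    w b u ≤ Real.sqrt 2 ^ b * (u ^ b + 1) := by
  have h1 : Real.sqrt (1 + u ^ 2) ≤ Real.sqrt 2 * max u 1 := by
    rw [show Real.sqrt 2 * max u 1 = Real.sqrt (2 * (max u 1)^2) by
      rw [Real.sqrt_mul (by norm_num), Real.sqrt_sq (le_trans zero_le_one (le_max_right u 1))]]
    apply Real.sqrt_le_sqrt
    rcases le_total u 1 with h | h
    · rw [max_eq_right h]; nlinarith
    · rw [max_eq_left h]; nlinarith
  calc w b u ≤ (Real.sqrt 2 * max u 1) ^ b :=
        Real.rpow_le_rpow (Real.sqrt_nonneg _) h1 hb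
    _ = Real.sqrt 2 ^ b * (max u 1) ^ b := by
        rw [Real.mul_rpow (Real.sqrt_nonneg _) (le_trans zero_le_one (le_max_right u 1))]
    _ ≤ Real.sqrt 2 ^ b * (u ^ b + 1) := by
        apply mul_le_mul_of_nonneg_left _ (Real.rpow_nonneg (Real.sqrt_nonneg _) _)
        rcases le_total u 1 with h | h
        · rw [max_eq_right h, Real.one_rpow]
          nlinarith [Real.rpow_nonneg hu b]
        · rw [max_eq_left h]
          nlinarith [Real.one_le_rpow h hb]

lemma K_integrableOn {lam b : ℝ} (hlam : 0 < lam) (hb : 0 ≤ b) :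
    IntegrableOn (K lam b) (Ioi 0) := by
  have hmaj : IntegrableOn
      (fun u => Real.sqrt 2 ^ b * (u ^ b * Real.exp (-lam * u)) +
        Real.sqrt 2 ^ b * Real.exp (-lam * u)) (Ioi 0) := by
    apply Integrable.add
    · exact ((integrableOn_rpow_mul_exp_neg_mul_rpow (by linarith : (-1:ℝ) < b)
        zero_lt_one hlam).congr_fun (fun x _ => by rw [Real.rpow_one]) measurableSet_Ioi).const_mul _
    · exact ((exp_neg_integrableOn_Ioi 0 hlam).congr_fun
        (fun x _ => by ring_nf) measurableSet_Ioi).const_mul _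
  apply hmaj.mono' ?_ ?_
  · apply (Measurable.aestronglyMeasurable ?_).restrict
    unfold K w
    fun_prop
  · filter_upwards [ae_restrict_mem measurableSet_Ioi] with u hu
    have hu0 : (0:ℝ) < u := hu
    have h1 : w b u ≤ Real.sqrt 2 ^ b * (u ^ b + 1) := w_le_aux hb hu0.le
    have h2 : K lam b u ≤ Real.sqrt 2 ^ b * (u ^ b + 1) * Real.exp (-lam * u) := by
      unfold K
      rw [mul_comm (Real.exp _)]
      exact mul_le_mul_of_nonneg_right h1 (Real.exp_nonneg _)
    rw [Real.norm_eq_abs, abs_of_nonneg (K_nonneg lam b u)]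
    nlinarith [Real.exp_nonneg (-lam * u), Real.rpow_nonneg (Real.sqrt_nonneg 2) b]

open ENNReal

lemma young {p q : ℝ} (hpq : p.HolderConjugate q) {φ H : ℝ → ℝ≥0∞}
    (hφ : Measurable φ) (hH : Measurable H) :
    ∫⁻ t, (∫⁻ s, φ (t - s) * H s) ^ p ≤ (∫⁻ u, φ u) ^ p * ∫⁻ s, (H s) ^ p := by
  set A := ∫⁻ u, φ u with hA
  have step1 : ∀ t : ℝ, ∫⁻ s, φ (t - s) = A := fun t =>
    (measurePreserving_sub_left volume t).lintegral_comp hφ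
  have step1' : ∀ s : ℝ, ∫⁻ t, φ (t - s) = A := fun s =>
    (measurePreserving_sub_right volume s).lintegral_comp hφ
  have hq0 : q ≠ 0 := hpq.symm.ne_zero
  have hp0 : p ≠ 0 := hpq.ne_zero
  have step2 : ∀ t : ℝ, (∫⁻ s, φ (t - s) * H s) ^ p
      ≤ A ^ (p - 1) * ∫⁻ s, φ (t - s) * (H s) ^ p := by
    intro t
    have hsplit : (∫⁻ s, φ (t - s) * H s)
        = ∫⁻ s, (φ (t - s)) ^ (1/q) * ((φ (t - s)) ^ (1/p) * H s) := by
      apply lintegral_congr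
      intro s
      rw [← mul_assoc, ← ENNReal.rpow_add_of_nonneg _ _ hpq.symm.one_div_nonneg hpq.one_div_nonneg]
      rw [show 1/q + 1/p = 1 by
        have := hpq.inv_add_inv_eq_one; rw [one_div, one_div]; linarith]
      rw [ENNReal.rpow_one]
    have hold := ENNReal.lintegral_mul_le_Lp_mul_Lq volume hpq.symm
      ((hφ.comp (by fun_prop : Measurable fun s : ℝ => t - s)).pow_const _).aemeasurable
      (((hφ.comp (by fun_prop : Measurable fun s : ℝ => t - s)).pow_const _).mul
        hH).aemeasurable
      (f := fun s => (φ (t - s)) ^ (1/q)) (g := fun s => (φ (t - s)) ^ (1/p) * H s)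
    simp only [Pi.mul_apply] at hold
    rw [← hsplit] at hold
    have h1 : ∀ s : ℝ, ((φ (t - s)) ^ (1/q)) ^ q = φ (t - s) := by
      intro s
      rw [← ENNReal.rpow_mul, one_div, inv_mul_cancel₀ hq0, ENNReal.rpow_one]
    have h2 : ∀ s : ℝ, ((φ (t - s)) ^ (1/p) * H s) ^ p = φ (t - s) * (H s) ^ p := by
      intro s
      rw [ENNReal.mul_rpow_of_nonneg _ _ hpq.nonneg, ← ENNReal.rpow_mul, one_div,
        inv_mul_cancel₀ hp0, ENNReal.rpow_one]
    simp only [h1, h2, step1] at hold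
    calc (∫⁻ s, φ (t - s) * H s) ^ p
        ≤ (A ^ (1/q) * (∫⁻ s, φ (t - s) * (H s) ^ p) ^ (1/p)) ^ p :=
          ENNReal.rpow_le_rpow hold hpq.nonneg
      _ = A ^ (p - 1) * ∫⁻ s, φ (t - s) * (H s) ^ p := by
          rw [ENNReal.mul_rpow_of_nonneg _ _ hpq.nonneg, ← ENNReal.rpow_mul,
            ← ENNReal.rpow_mul, one_div, one_div, inv_mul_cancel₀ hp0, ENNReal.rpow_one]
          congr 1
          rw [← hpq.div_conj_eq_sub_one]
          congr 1
          field_simp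
  have hmeas2 : Measurable fun z : ℝ × ℝ => φ (z.1 - z.2) * (H z.2) ^ p := by fun_prop
  calc ∫⁻ t, (∫⁻ s, φ (t - s) * H s) ^ p
      ≤ ∫⁻ t, A ^ (p - 1) * ∫⁻ s, φ (t - s) * (H s) ^ p := lintegral_mono step2
    _ = A ^ (p - 1) * ∫⁻ t, ∫⁻ s, φ (t - s) * (H s) ^ p := by
        rw [lintegral_const_mul _ hmeas2.lintegral_prod_right']
    _ = A ^ (p - 1) * ∫⁻ s, ∫⁻ t, φ (t - s) * (H s) ^ p := by
        rw [lintegral_lintegral_swap hmeas2.aemeasurable]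
    _ = A ^ (p - 1) * ∫⁻ s, A * (H s) ^ p := by
        congr 1
        apply lintegral_congr
        intro s
        rw [lintegral_mul_const _ (show Measurable fun t : ℝ => φ (t - s) by fun_prop), step1' s, mul_comm]
    _ = (A ^ (p - 1) * A) * ∫⁻ s, (H s) ^ p := by
        rw [lintegral_const_mul _ (hH.pow_const _)]; ring
    _ = (∫⁻ u, φ u) ^ p * ∫⁻ s, (H s) ^ p := by
        rw [← hA]
        congr 1
        nth_rewrite 2 [← ENNReal.rpow_one A]
        rw [← ENNReal.rpow_add_of_nonneg _ _ (by linarith [hpq.lt]) zero_le_one]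
        norm_num

section Pointwise

variable {lam p b : ℝ} {h : ℝ → ℝ}

lemma abs_le_wabs (hb : 0 ≤ b) (s : ℝ) : |h s| ≤ w b s * |h s| := by
  nlinarith [one_le_w hb s, abs_nonneg (h s)]

lemma lint_Iio_lt_top (hlam : 0 < lam) (hp : 1 < p) (hb : 0 ≤ b) (hh : Measurable h)
    (Hfin : ∫⁻ s, (ENNReal.ofReal (w b s * |h s|)) ^ p ≠ ⊤) (t : ℝ) :
    ∫⁻ s in Iio t, ENNReal.ofReal (Real.exp (-lam * (t - s)) * |h s|) < ⊤ := by
  have hpq : p.HolderConjugate (p.conjExponent) := Real.HolderConjugate.conjExponent hp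
  set q := p.conjExponent with hqdef
  have hq1 : 1 < q := hpq.symm.lt
  have step1 : ∀ s : ℝ, ENNReal.ofReal (Real.exp (-lam * (t - s)) * |h s|)
      ≤ ENNReal.ofReal (Real.exp (-lam * (t - s))) * ENNReal.ofReal (w b s * |h s|) := by
    intro s
    rw [← ENNReal.ofReal_mul (Real.exp_nonneg _)]
    exact ENNReal.ofReal_le_ofReal (by
      have := abs_le_wabs (h := h) hb s
      nlinarith [Real.exp_nonneg (-lam * (t - s))])
  have hold := ENNReal.lintegral_mul_le_Lp_mul_Lq (volume.restrict (Iio t)) hpq.symm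
    (f := fun s => ENNReal.ofReal (Real.exp (-lam * (t - s))))
    (g := fun s => ENNReal.ofReal (w b s * |h s|))
    (by fun_prop) (by
      apply Measurable.aemeasurable
      apply ENNReal.measurable_ofReal.comp
      apply Measurable.mul _ hh.abs
      unfold w; fun_prop)
  have fact1 : (∫⁻ s in Iio t, (ENNReal.ofReal (Real.exp (-lam * (t - s)))) ^ q) < ⊤ := by
    have heq : ∀ s : ℝ, (ENNReal.ofReal (Real.exp (-lam * (t - s)))) ^ q
        = ENNReal.ofReal (Real.exp (-(q * lam) * (t - s))) := by
      intro s
      rw [ENNReal.ofReal_rpow_of_nonneg (Real.exp_nonneg _) (by linarith : (0:ℝ) ≤ q),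
        ← Real.exp_mul]
      ring_nf
    simp only [heq]
    exact (exp_integrableOn_Iio (by positivity) t).lintegral_lt_top
  have fact2 : (∫⁻ s in Iio t, (ENNReal.ofReal (w b s * |h s|)) ^ p) < ⊤ :=
    lt_of_le_of_lt (setLIntegral_le_lintegral _ _) (lt_top_iff_ne_top.2 Hfin)
  calc ∫⁻ s in Iio t, ENNReal.ofReal (Real.exp (-lam * (t - s)) * |h s|)
      ≤ ∫⁻ s in Iio t, ENNReal.ofReal (Real.exp (-lam * (t - s)))
          * ENNReal.ofReal (w b s * |h s|) := lintegral_mono step1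
    _ ≤ (∫⁻ s in Iio t, (ENNReal.ofReal (Real.exp (-lam * (t - s)))) ^ q) ^ (1/q)
          * (∫⁻ s in Iio t, (ENNReal.ofReal (w b s * |h s|)) ^ p) ^ (1/p) := by
        simp only [Pi.mul_apply] at hold
        exact hold
    _ < ⊤ := ENNReal.mul_lt_top
        (ENNReal.rpow_lt_top_of_nonneg (by positivity) fact1.ne)
        (ENNReal.rpow_lt_top_of_nonneg (by positivity) fact2.ne)

lemma integrableOn_Iio_conv (hlam : 0 < lam) (hp : 1 < p) (hb : 0 ≤ b) (hh : Measurable h)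
    (Hfin : ∫⁻ s, (ENNReal.ofReal (w b s * |h s|)) ^ p ≠ ⊤) (t : ℝ) :
    IntegrableOn (fun s => Real.exp (-lam * (t - s)) * h s) (Iio t) := by
  constructor
  · exact (Measurable.aestronglyMeasurable (by fun_prop)).restrict
  · rw [hasFiniteIntegral_iff_norm]
    have heq : ∀ s : ℝ, ENNReal.ofReal ‖Real.exp (-lam * (t - s)) * h s‖
        = ENNReal.ofReal (Real.exp (-lam * (t - s)) * |h s|) := by
      intro s
      rw [Real.norm_eq_abs, abs_mul, abs_of_nonneg (Real.exp_nonneg _)]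
    simp only [heq]
    exact lint_Iio_lt_top hlam hp hb hh Hfin t

end Pointwise
section Conv

variable {lam p b : ℝ} {h : ℝ → ℝ}

lemma measurable_w (b : ℝ) : Measurable (w b) := by unfold w; fun_prop

noncomputable def g (lam : ℝ) (h : ℝ → ℝ) (t : ℝ) : ℝ :=
  ∫ s in Iio t, Real.exp (-lam * (t - s)) * h s

lemma measurable_g (lam : ℝ) (hh : Measurable h) : Measurable (g lam h) := by
  have hF : Measurable fun z : ℝ × ℝ =>
      {q : ℝ × ℝ | q.2 < q.1}.indicator (fun q => Real.exp (-lam * (q.1 - q.2)) * h q.2) z :=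
    Measurable.indicator (by fun_prop) (measurableSet_lt measurable_snd measurable_fst)
  have : (fun t => ∫ s, {q : ℝ × ℝ | q.2 < q.1}.indicator
      (fun q => Real.exp (-lam * (q.1 - q.2)) * h q.2) (t, s)) = g lam h := by
    funext t
    rw [g, ← integral_indicator measurableSet_Iio]
    congr 1
  rw [← this]
  exact (StronglyMeasurable.integral_prod_right' (ν := volume)
    hF.stronglyMeasurable).measurable

noncomputable def phi (lam b : ℝ) (u : ℝ) : ℝ≥0∞ :=
  (Ioi (0:ℝ)).indicator (fun u => ENNReal.ofReal (K lam b u)) u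

lemma measurable_phi (lam b : ℝ) : Measurable (phi lam b) := by
  apply Measurable.indicator _ measurableSet_Ioi
  apply ENNReal.measurable_ofReal.comp
  unfold K
  exact (Real.measurable_exp.comp (by fun_prop)).mul (measurable_w b)

noncomputable def Anum (lam b : ℝ) : ℝ≥0∞ := ∫⁻ u, phi lam b u

lemma Anum_lt_top (hlam : 0 < lam) (hb : 0 ≤ b) : Anum lam b < ⊤ := by
  rw [Anum]
  unfold phi
  rw [lintegral_indicator measurableSet_Ioi]
  exact (K_integrableOn hlam hb).lintegral_lt_top

lemma wg_le (hlam : 0 < lam) (hp : 1 < p) (hb : 0 ≤ b) (hh : Measurable h)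
    (Hfin : ∫⁻ s, (ENNReal.ofReal (w b s * |h s|)) ^ p ≠ ⊤) (t : ℝ) :
    ENNReal.ofReal (w b t * |g lam h t|)
      ≤ ENNReal.ofReal (Real.sqrt 2 ^ b)
          * ∫⁻ s, phi lam b (t - s) * ENNReal.ofReal (w b s * |h s|) := by
  have hint := integrableOn_Iio_conv hlam hp hb hh Hfin t
  have hint' : IntegrableOn (fun s => w b t * (Real.exp (-lam * (t - s)) * |h s|)) (Iio t) := by
    apply Integrable.const_mul
    apply IntegrableOn.congr_fun hint.abs _ measurableSet_Iio
    intro s _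
    simp only [abs_mul, abs_of_nonneg (Real.exp_nonneg _)]
  have h1 : w b t * |g lam h t| ≤ ∫ s in Iio t, w b t * (Real.exp (-lam * (t - s)) * |h s|) := by
    rw [integral_const_mul]
    apply mul_le_mul_of_nonneg_left _ (w_nonneg b t)
    have habs : |g lam h t| ≤ ∫ s in Iio t, |Real.exp (-lam * (t - s)) * h s| := by
      have hni := norm_integral_le_integral_norm (μ := volume.restrict (Iio t))
        (f := fun s => Real.exp (-lam * (t - s)) * h s)
      simpa only [Real.norm_eq_abs, g] using hni
    calc |g lam h t| ≤ ∫ s in Iio t, |Real.exp (-lam * (t - s)) * h s| := habs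
      _ = ∫ s in Iio t, Real.exp (-lam * (t - s)) * |h s| := by
          apply integral_congr_ae
          filter_upwards with s
          rw [abs_mul, abs_of_nonneg (Real.exp_nonneg _)]
  calc ENNReal.ofReal (w b t * |g lam h t|)
      ≤ ENNReal.ofReal (∫ s in Iio t, w b t * (Real.exp (-lam * (t - s)) * |h s|)) :=
        ENNReal.ofReal_le_ofReal h1
    _ = ∫⁻ s in Iio t, ENNReal.ofReal (w b t * (Real.exp (-lam * (t - s)) * |h s|)) := by
        apply ofReal_integral_eq_lintegral_ofReal hint'
        filter_upwards with s
        exact mul_nonneg (w_nonneg b t) (mul_nonneg (Real.exp_nonneg _) (abs_nonneg _))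
    _ ≤ ∫⁻ s in Iio t, ENNReal.ofReal (Real.sqrt 2 ^ b)
          * (phi lam b (t - s) * ENNReal.ofReal (w b s * |h s|)) := by
        apply setLIntegral_mono' measurableSet_Iio
        intro s hs
        have hts : (0:ℝ) < t - s := by simp only [mem_Iio] at hs; linarith
        rw [phi, Set.indicator_of_mem (mem_Ioi.2 hts)]
        rw [← ENNReal.ofReal_mul (K_nonneg lam b (t - s)),
          ← ENNReal.ofReal_mul (Real.rpow_nonneg (Real.sqrt_nonneg 2) b)]
        apply ENNReal.ofReal_le_ofReal
        have hpeetre := peetre hb t s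
        unfold K
        have he : 0 ≤ Real.exp (-lam * (t - s)) := Real.exp_nonneg _
        have h2 : w b t * (Real.exp (-lam * (t - s)) * |h s|)
            = (w b t) * Real.exp (-lam * (t - s)) * |h s| := by ring
        nlinarith [w_nonneg b (t - s), w_nonneg b s, abs_nonneg (h s),
          mul_nonneg (mul_nonneg (Real.rpow_nonneg (Real.sqrt_nonneg 2) b) (w_nonneg b (t-s))) (w_nonneg b s),
          mul_le_mul_of_nonneg_right hpeetre (mul_nonneg he (abs_nonneg (h s)))]
    _ ≤ ∫⁻ s, ENNReal.ofReal (Real.sqrt 2 ^ b)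
          * (phi lam b (t - s) * ENNReal.ofReal (w b s * |h s|)) :=
        setLIntegral_le_lintegral _ _
    _ = ENNReal.ofReal (Real.sqrt 2 ^ b)
          * ∫⁻ s, phi lam b (t - s) * ENNReal.ofReal (w b s * |h s|) := by
        rw [lintegral_const_mul]
        apply Measurable.mul
        · exact (measurable_phi lam b).comp (by fun_prop)
        · exact ENNReal.measurable_ofReal.comp ((measurable_w b).mul hh.abs)

end Conv
section LpBound

variable {lam p b : ℝ} {h : ℝ → ℝ}

lemma measurable_Hnn (b : ℝ) (hh : Measurable h) :
    Measurable fun s => ENNReal.ofReal (w b s * |h s|) :=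
  ENNReal.measurable_ofReal.comp ((measurable_w b).mul hh.abs)

lemma Xe_le (hlam : 0 < lam) (hp : 1 < p) (hb : 0 ≤ b) (hh : Measurable h)
    (Hfin : ∫⁻ s, (ENNReal.ofReal (w b s * |h s|)) ^ p ≠ ⊤) :
    ∫⁻ t, (ENNReal.ofReal (w b t * |g lam h t|)) ^ p
      ≤ (ENNReal.ofReal (Real.sqrt 2 ^ b) * Anum lam b) ^ p
          * ∫⁻ s, (ENNReal.ofReal (w b s * |h s|)) ^ p := by
  have hpq : p.HolderConjugate (p.conjExponent) := Real.HolderConjugate.conjExponent hp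
  set cb := ENNReal.ofReal (Real.sqrt 2 ^ b) with hcb
  have hmeasF : Measurable fun z : ℝ × ℝ =>
      phi lam b (z.1 - z.2) * ENNReal.ofReal (w b z.2 * |h z.2|) :=
    ((measurable_phi lam b).comp (by fun_prop)).mul ((measurable_Hnn b hh).comp measurable_snd)
  calc ∫⁻ t, (ENNReal.ofReal (w b t * |g lam h t|)) ^ p
      ≤ ∫⁻ t, (cb * ∫⁻ s, phi lam b (t - s) * ENNReal.ofReal (w b s * |h s|)) ^ p := by
        apply lintegral_mono
        intro t
        exact ENNReal.rpow_le_rpow (wg_le hlam hp hb hh Hfin t) hpq.nonneg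
    _ = cb ^ p * ∫⁻ t, (∫⁻ s, phi lam b (t - s) * ENNReal.ofReal (w b s * |h s|)) ^ p := by
        rw [← lintegral_const_mul]
        · apply lintegral_congr
          intro t
          rw [ENNReal.mul_rpow_of_nonneg _ _ hpq.nonneg]
        · exact (hmeasF.lintegral_prod_right').pow_const _
    _ ≤ cb ^ p * ((∫⁻ u, phi lam b u) ^ p * ∫⁻ s, (ENNReal.ofReal (w b s * |h s|)) ^ p) := by
        apply mul_le_mul_right
        exact young hpq (measurable_phi lam b) (measurable_Hnn b hh)
    _ = (cb * Anum lam b) ^ p * ∫⁻ s, (ENNReal.ofReal (w b s * |h s|)) ^ p := by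
        rw [ENNReal.mul_rpow_of_nonneg _ _ hpq.nonneg, Anum, mul_assoc]

end LpBound
section FTC

variable {lam p b : ℝ} {h : ℝ → ℝ}

lemma locallyIntegrable_of_fin (hp : 1 < p) (hb : 0 ≤ b) {f : ℝ → ℝ} (hf : Measurable f)
    (hfin : ∫⁻ s, (ENNReal.ofReal (w b s * |f s|)) ^ p ≠ ⊤) :
    LocallyIntegrable f volume := by
  apply MemLp.locallyIntegrable (p := ENNReal.ofReal p) _ (ENNReal.one_le_ofReal.2 hp.le)
  constructor
  · exact hf.aestronglyMeasurable
  · rw [eLpNorm_eq_lintegral_rpow_enorm_toReal (by simp [hp.le]; linarith)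
      ENNReal.ofReal_ne_top]
    apply ENNReal.rpow_lt_top_of_nonneg (by positivity)
    have hb1 : ∀ s : ℝ, (‖f s‖ₑ) ^ (ENNReal.ofReal p).toReal
        ≤ (ENNReal.ofReal (w b s * |f s|)) ^ p := by
      intro s
      rw [ENNReal.toReal_ofReal (by linarith)]
      apply ENNReal.rpow_le_rpow _ (by linarith)
      rw [← ofReal_norm_eq_enorm, Real.norm_eq_abs]
      exact ENNReal.ofReal_le_ofReal (abs_le_wabs hb s)
    exact ne_top_of_le_ne_top hfin (lintegral_mono hb1)

lemma key_fubini (hlam : 0 < lam) (hp : 1 < p) (hb : 0 ≤ b) (hh : Measurable h)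
    (Hfin : ∫⁻ s, (ENNReal.ofReal (w b s * |h s|)) ^ p ≠ ⊤) {a c : ℝ} (hac : a ≤ c) :
    lam * ∫ t in Ioc a c, g lam h t
      = g lam h a + (∫ s in Ioc a c, h s) - g lam h c := by
  have hloc : LocallyIntegrable h volume := locallyIntegrable_of_fin hp hb hh Hfin
  set f : ℝ → ℝ → ℝ :=
    fun t s => (Iio t).indicator (fun s => lam * (Real.exp (-lam * (t - s)) * h s)) s with hfdef
  have hunc : Function.uncurry f = fun z : ℝ × ℝ =>
      {q : ℝ × ℝ | q.2 < q.1}.indicator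
        (fun q => lam * (Real.exp (-lam * (q.1 - q.2)) * h q.2)) z := rfl
  have hmeas_unc : Measurable (Function.uncurry f) := by
    rw [hunc]
    exact Measurable.indicator (by fun_prop) (measurableSet_lt measurable_snd measurable_fst)
  -- norm identity
  have hnorm : ∀ t s : ℝ, ENNReal.ofReal ‖f t s‖
      = (Iio t).indicator (fun s => ENNReal.ofReal (lam * (Real.exp (-lam * (t - s)) * |h s|))) s := by
    intro t s
    by_cases hs : s ∈ Iio t
    · rw [hfdef]
      simp only [Set.indicator_of_mem hs, Real.norm_eq_abs, abs_mul,
        abs_of_nonneg hlam.le, abs_of_nonneg (Real.exp_nonneg _)]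
    · simp [hfdef, Set.indicator_of_notMem hs]
  have hmeas_in : Measurable fun s => ENNReal.ofReal (Real.exp (-lam * (c - s)) * |h s|) := by
    fun_prop
  have hJc : (∫⁻ s in Iio c, ENNReal.ofReal (Real.exp (-lam * (c - s)) * |h s|)) < ⊤ :=
    lint_Iio_lt_top hlam hp hb hh Hfin c
  have hInt : Integrable (Function.uncurry f) ((volume.restrict (Ioc a c)).prod volume) := by
    constructor
    · exact hmeas_unc.aestronglyMeasurable
    · rw [hasFiniteIntegral_iff_norm, lintegral_prod _
        (by exact hmeas_unc.norm.ennreal_ofReal.aemeasurable)]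
      set κ : ℝ≥0∞ := ENNReal.ofReal lam * (ENNReal.ofReal (Real.exp (lam * (c - a)))
        * ∫⁻ s in Iio c, ENNReal.ofReal (Real.exp (-lam * (c - s)) * |h s|)) with hκ
      have hbound : ∀ t ∈ Ioc a c, (∫⁻ s, ENNReal.ofReal ‖f t s‖) ≤ κ := by
        intro t ht
        have e1 : (∫⁻ s, ENNReal.ofReal ‖f t s‖)
            = ∫⁻ s in Iio t, ENNReal.ofReal (lam * (Real.exp (-lam * (t - s)) * |h s|)) := by
          simp only [hnorm]
          rw [lintegral_indicator measurableSet_Iio]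
        rw [e1]
        have e2 : ∀ s : ℝ, s ∈ Iio t →
            ENNReal.ofReal (lam * (Real.exp (-lam * (t - s)) * |h s|))
            ≤ ENNReal.ofReal lam * (ENNReal.ofReal (Real.exp (lam * (c - a)))
                * ENNReal.ofReal (Real.exp (-lam * (c - s)) * |h s|)) := by
          intro s _
          rw [← ENNReal.ofReal_mul (Real.exp_nonneg _), ← ENNReal.ofReal_mul hlam.le]
          apply ENNReal.ofReal_le_ofReal
          have hfact : Real.exp (-lam * (t - s))
              ≤ Real.exp (lam * (c - a)) * Real.exp (-lam * (c - s)) := by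
            rw [← Real.exp_add]
            apply Real.exp_le_exp.2
            nlinarith [ht.1, ht.2]
          nlinarith [abs_nonneg (h s), Real.exp_nonneg (-lam * (t - s)),
            mul_le_mul_of_nonneg_right hfact (abs_nonneg (h s))]
        calc ∫⁻ s in Iio t, ENNReal.ofReal (lam * (Real.exp (-lam * (t - s)) * |h s|))
            ≤ ∫⁻ s in Iio t, ENNReal.ofReal lam * (ENNReal.ofReal (Real.exp (lam * (c - a)))
                * ENNReal.ofReal (Real.exp (-lam * (c - s)) * |h s|)) :=
              setLIntegral_mono' measurableSet_Iio e2
          _ ≤ ∫⁻ s in Iio c, ENNReal.ofReal lam * (ENNReal.ofReal (Real.exp (lam * (c - a)))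
                * ENNReal.ofReal (Real.exp (-lam * (c - s)) * |h s|)) :=
              lintegral_mono_set (Iio_subset_Iio ht.2)
          _ = κ := by
              rw [hκ, ← lintegral_const_mul _ hmeas_in,
                ← lintegral_const_mul _ (show Measurable fun s => ENNReal.ofReal (Real.exp (lam * (c - a)))
                  * ENNReal.ofReal (Real.exp (-lam * (c - s)) * |h s|) from measurable_const.mul hmeas_in)]
      have hκfin : κ < ⊤ := by
        rw [hκ]
        exact ENNReal.mul_lt_top ENNReal.ofReal_lt_top
          (ENNReal.mul_lt_top ENNReal.ofReal_lt_top hJc)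
      calc ∫⁻ t in Ioc a c, ∫⁻ s, ENNReal.ofReal ‖f t s‖
          ≤ ∫⁻ _ in Ioc a c, κ := setLIntegral_mono' measurableSet_Ioc hbound
        _ = κ * volume (Ioc a c) := setLIntegral_const _ _
        _ < ⊤ := ENNReal.mul_lt_top hκfin (by rw [Real.volume_Ioc]; exact ENNReal.ofReal_lt_top)
  have hswap := integral_integral_swap hInt
  have lhs_eq : ∀ t : ℝ, (∫ s, f t s) = lam * g lam h t := by
    intro t
    rw [hfdef]
    simp only
    rw [integral_indicator measurableSet_Iio, integral_const_mul, g]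
  -- the inner integral in s
  set ψ : ℝ → ℝ := fun s => (Iio c).indicator
    (fun s => (Real.exp (-lam * (max a s - s)) - Real.exp (-lam * (c - s))) * h s) s with hψdef
  have inner_eq : ∀ s : ℝ, (∫ t in Ioc a c, f t s) = ψ s := by
    intro s
    have hrew : ∀ t : ℝ, f t s
        = (Ioi s).indicator (fun t => lam * (Real.exp (-lam * (t - s)) * h s)) t := by
      intro t
      by_cases hst : s < t
      · rw [hfdef]
        simp only [Set.indicator_of_mem (mem_Iio.2 hst), Set.indicator_of_mem (mem_Ioi.2 hst)]
      · rw [hfdef]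
        simp only [Set.indicator_of_notMem (fun hx => hst (mem_Iio.1 hx)),
          Set.indicator_of_notMem (fun hx => hst (mem_Ioi.1 hx))]
    simp only [hrew]
    rw [setIntegral_indicator measurableSet_Ioi]
    have hset : Ioc a c ∩ Ioi s = Ioc (max a s) c := by
      ext x
      simp only [mem_inter_iff, mem_Ioc, mem_Ioi, max_lt_iff]
      tauto
    rw [hset]
    by_cases hsc : s < c
    · have hmc : max a s ≤ c := max_le hac hsc.le
      rw [← intervalIntegral.integral_of_le hmc, hψdef]
      simp only [Set.indicator_of_mem (mem_Iio.2 hsc)]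
      have heval : (∫ t in (max a s)..c, lam * Real.exp (-lam * (t - s)))
          = Real.exp (-lam * (max a s - s)) - Real.exp (-lam * (c - s)) := by
        have hder : ∀ t ∈ uIcc (max a s) c,
            HasDerivAt (fun t => -Real.exp (-lam * (t - s)))
              (lam * Real.exp (-lam * (t - s))) t := by
          intro t _
          have h1 : HasDerivAt (fun t : ℝ => -lam * (t - s)) (-lam) t := by
            simpa using ((hasDerivAt_id t).sub_const s).const_mul (-lam)
          have h2 : HasDerivAt (fun t => -Real.exp (-lam * (t - s)))
              (-(Real.exp (-lam * (t - s)) * -lam)) t := h1.exp.neg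
          convert h2 using 1
          ring
        rw [intervalIntegral.integral_eq_sub_of_hasDerivAt hder
          (Continuous.intervalIntegrable (by fun_prop) _ _)]
        ring
      calc (∫ t in (max a s)..c, lam * (Real.exp (-lam * (t - s)) * h s))
          = (∫ t in (max a s)..c, lam * Real.exp (-lam * (t - s))) * h s := by
            rw [← intervalIntegral.integral_mul_const]
            congr 1
            funext t
            ring
        _ = _ := by rw [heval]
    · have hempty : Ioc (max a s) c = ∅ :=
        Ioc_eq_empty (fun hlt => hsc (lt_of_le_of_lt (le_max_right a s) hlt))
      rw [hempty, hψdef]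
      simp only [Set.indicator_of_notMem (fun hx => hsc (mem_Iio.1 hx)), Measure.restrict_empty,
        integral_zero_measure]
  -- compute ∫ ψ
  have hf2 : IntegrableOn (fun s => Real.exp (-lam * (c - s)) * h s) (Iio c) volume :=
    integrableOn_Iio_conv hlam hp hb hh Hfin c
  have hf1a : IntegrableOn (fun s => Real.exp (-lam * (max a s - s)) * h s) (Iio a) volume := by
    apply IntegrableOn.congr_fun (integrableOn_Iio_conv hlam hp hb hh Hfin a) _ measurableSet_Iio
    intro s hs
    simp [max_eq_left (le_of_lt (mem_Iio.1 hs))]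
  have hf1b : IntegrableOn (fun s => Real.exp (-lam * (max a s - s)) * h s) (Ico a c) volume := by
    apply IntegrableOn.congr_fun
      ((hloc.integrableOn_isCompact isCompact_Icc).mono_set Ico_subset_Icc_self) _
      measurableSet_Ico
    intro s hs
    simp [max_eq_right (mem_Ico.1 hs).1]
  have hdisj : Disjoint (Iio a) (Ico a c) :=
    disjoint_left.2 fun x hx hx' => absurd hx'.1 (not_le.2 (mem_Iio.1 hx))
  have hf1 : IntegrableOn (fun s => Real.exp (-lam * (max a s - s)) * h s) (Iio c) volume := by
    rw [← Iio_union_Ico_eq_Iio hac]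
    exact hf1a.union hf1b
  have hψint : (∫ s, ψ s)
      = (∫ s in Iio c, Real.exp (-lam * (max a s - s)) * h s)
        - ∫ s in Iio c, Real.exp (-lam * (c - s)) * h s := by
    rw [hψdef]
    simp only
    rw [integral_indicator measurableSet_Iio]
    rw [← integral_sub hf1 hf2]
    apply setIntegral_congr_fun measurableSet_Iio
    intro s _
    simp only
    ring
  have hsplit1 : (∫ s in Iio c, Real.exp (-lam * (max a s - s)) * h s)
      = g lam h a + ∫ s in Ico a c, h s := by
    rw [← Iio_union_Ico_eq_Iio hac, setIntegral_union hdisj measurableSet_Ico hf1a hf1b]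
    congr 1
    · rw [g]
      apply setIntegral_congr_fun measurableSet_Iio
      intro s hs
      simp [max_eq_left (le_of_lt (mem_Iio.1 hs))]
    · apply setIntegral_congr_fun measurableSet_Ico
      intro s hs
      simp [max_eq_right (mem_Ico.1 hs).1]
  have hIcoIoc : (∫ s in Ico a c, h s) = ∫ s in Ioc a c, h s := by
    rw [integral_Ico_eq_integral_Ioo, integral_Ioc_eq_integral_Ioo]
  -- put everything together
  have hlhs : (∫ t in Ioc a c, ∫ s, f t s) = lam * ∫ t in Ioc a c, g lam h t := by
    rw [← integral_const_mul]
    exact integral_congr_ae (Filter.Eventually.of_forall lhs_eq)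
  have hrhs : (∫ s, ∫ t in Ioc a c, f t s) = g lam h a + (∫ s in Ioc a c, h s) - g lam h c := by
    rw [integral_congr_ae (Filter.Eventually.of_forall inner_eq), hψint, hsplit1, hIcoIoc]
    rfl
  rw [← hlhs, hswap, hrhs]

end FTC

section Final

variable {lam p b : ℝ} {h : ℝ → ℝ}

lemma Gfin (hlam : 0 < lam) (hp : 1 < p) (hb : 0 ≤ b) (hh : Measurable h)
    (Hfin : ∫⁻ s, (ENNReal.ofReal (w b s * |h s|)) ^ p ≠ ⊤) :
    ∫⁻ t, (ENNReal.ofReal (w b t * |g lam h t|)) ^ p ≠ ⊤ := by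
  apply ne_top_of_le_ne_top _ (Xe_le hlam hp hb hh Hfin)
  exact (ENNReal.mul_lt_top
    (ENNReal.rpow_lt_top_of_nonneg (by linarith)
      (ENNReal.mul_ne_top ENNReal.ofReal_ne_top (Anum_lt_top hlam hb).ne))
    (lt_top_iff_ne_top.2 Hfin)).ne

lemma ftc_full (hlam : 0 < lam) (hp : 1 < p) (hb : 0 ≤ b) (hh : Measurable h)
    (Hfin : ∫⁻ s, (ENNReal.ofReal (w b s * |h s|)) ^ p ≠ ⊤) (a c : ℝ) :
    (∫ s in a..c, (h s - lam * g lam h s)) = g lam h c - g lam h a := by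
  have hloc : LocallyIntegrable h volume := locallyIntegrable_of_fin hp hb hh Hfin
  have hgloc : LocallyIntegrable (g lam h) volume :=
    locallyIntegrable_of_fin hp hb (measurable_g lam hh) (Gfin hlam hp hb hh Hfin)
  have key : ∀ a c : ℝ, a ≤ c →
      (∫ s in a..c, (h s - lam * g lam h s)) = g lam h c - g lam h a := by
    intro a c hac
    rw [intervalIntegral.integral_of_le hac]
    have hInth : IntegrableOn h (Ioc a c) volume :=
      (hloc.integrableOn_isCompact isCompact_Icc).mono_set Ioc_subset_Icc_self
    have hIntg : IntegrableOn (g lam h) (Ioc a c) volume :=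
      (hgloc.integrableOn_isCompact isCompact_Icc).mono_set Ioc_subset_Icc_self
    rw [integral_sub hInth (hIntg.const_mul lam), integral_const_mul,
      key_fubini hlam hp hb hh Hfin hac]
    ring
  rcases le_total a c with hac | hca
  · exact key a c hac
  · rw [intervalIntegral.integral_symm, key c a hca]
    ring

lemma integral_eq_toReal (hp : 1 < p) {f : ℝ → ℝ} (hf : Measurable f) :
    ∫ t, (w b t * |f t|) ^ p = (∫⁻ t, (ENNReal.ofReal (w b t * |f t|)) ^ p).toReal := by
  have hmeas : Measurable fun t => (w b t * |f t|) ^ p := by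
    unfold w
    fun_prop
  rw [integral_eq_lintegral_of_nonneg_ae (Filter.Eventually.of_forall fun t =>
    Real.rpow_nonneg (mul_nonneg (w_nonneg b t) (abs_nonneg _)) p) hmeas.aestronglyMeasurable]
  congr 1
  apply lintegral_congr
  intro t
  rw [← ENNReal.ofReal_rpow_of_nonneg (mul_nonneg (w_nonneg b t) (abs_nonneg _)) (by linarith)]

lemma final_bound (hlam : 0 < lam) (hp : 1 < p) (hb : 0 ≤ b) (hh : Measurable h)
    (Hfin : ∫⁻ s, (ENNReal.ofReal (w b s * |h s|)) ^ p ≠ ⊤) :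
    (∫⁻ t, (ENNReal.ofReal (w b t * |g lam h t|)) ^ p) ^ (1/p)
      + (∫⁻ t, (ENNReal.ofReal (w b t * |h t - lam * g lam h t|)) ^ p) ^ (1/p)
      ≤ (ENNReal.ofReal (Real.sqrt 2 ^ b) * Anum lam b
          + (1 + ENNReal.ofReal lam * (ENNReal.ofReal (Real.sqrt 2 ^ b) * Anum lam b)))
        * (∫⁻ t, (ENNReal.ofReal (w b t * |h t|)) ^ p) ^ (1/p) := by
  have hp0 : (0:ℝ) < p := lt_trans zero_lt_one hp
  set cbA := ENNReal.ofReal (Real.sqrt 2 ^ b) * Anum lam b with hcbA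
  set Znn := ∫⁻ t, (ENNReal.ofReal (w b t * |h t|)) ^ p with hZnn
  set Xnn := ∫⁻ t, (ENNReal.ofReal (w b t * |g lam h t|)) ^ p with hXnn
  set Ynn := ∫⁻ t, (ENNReal.ofReal (w b t * |h t - lam * g lam h t|)) ^ p with hYnn
  have hpow : ∀ x : ℝ≥0∞, x ≠ ⊤ → (x ^ p) ^ (1/p) = x := by
    intro x hx
    rw [← ENNReal.rpow_mul, mul_one_div, div_self hp0.ne', ENNReal.rpow_one]
  have hXle : Xnn ≤ cbA ^ p * Znn := Xe_le hlam hp hb hh Hfin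
  have hX : Xnn ^ (1/p) ≤ cbA * Znn ^ (1/p) := by
    calc Xnn ^ (1/p) ≤ (cbA ^ p * Znn) ^ (1/p) :=
          ENNReal.rpow_le_rpow hXle (by positivity)
      _ = cbA * Znn ^ (1/p) := by
          rw [ENNReal.mul_rpow_of_nonneg _ _ (by positivity),
            hpow cbA (ENNReal.mul_ne_top ENNReal.ofReal_ne_top (Anum_lt_top hlam hb).ne)]
  have tri : ∀ t : ℝ, ENNReal.ofReal (w b t * |h t - lam * g lam h t|)
      ≤ ENNReal.ofReal (w b t * |h t|)
        + ENNReal.ofReal lam * ENNReal.ofReal (w b t * |g lam h t|) := by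
    intro t
    rw [← ENNReal.ofReal_mul hlam.le, ← ENNReal.ofReal_add
      (mul_nonneg (w_nonneg b t) (abs_nonneg _))
      (mul_nonneg hlam.le (mul_nonneg (w_nonneg b t) (abs_nonneg _)))]
    apply ENNReal.ofReal_le_ofReal
    have habs : |h t - lam * g lam h t| ≤ |h t| + lam * |g lam h t| := by
      have := norm_sub_le (h t) (lam * g lam h t)
      simp only [Real.norm_eq_abs, abs_mul, abs_of_nonneg hlam.le] at this
      exact this
    nlinarith [w_nonneg b t, mul_le_mul_of_nonneg_left habs (w_nonneg b t)]
  have hmeas1 : Measurable fun t => ENNReal.ofReal (w b t * |h t|) := measurable_Hnn b hh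
  have hmeas2 : Measurable fun t =>
      ENNReal.ofReal lam * ENNReal.ofReal (w b t * |g lam h t|) :=
    measurable_const.mul (measurable_Hnn b (measurable_g lam hh))
  have hY : Ynn ^ (1/p) ≤ Znn ^ (1/p) + ENNReal.ofReal lam * Xnn ^ (1/p) := by
    calc Ynn ^ (1/p)
        ≤ (∫⁻ t, (ENNReal.ofReal (w b t * |h t|)
            + ENNReal.ofReal lam * ENNReal.ofReal (w b t * |g lam h t|)) ^ p) ^ (1/p) := by
          apply ENNReal.rpow_le_rpow _ (by positivity)
          exact lintegral_mono fun t => ENNReal.rpow_le_rpow (tri t) hp0.le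
      _ ≤ (∫⁻ t, (ENNReal.ofReal (w b t * |h t|)) ^ p) ^ (1/p)
            + (∫⁻ t, (ENNReal.ofReal lam * ENNReal.ofReal (w b t * |g lam h t|)) ^ p) ^ (1/p) :=
          ENNReal.lintegral_Lp_add_le hmeas1.aemeasurable hmeas2.aemeasurable hp.le
      _ = Znn ^ (1/p) + ENNReal.ofReal lam * Xnn ^ (1/p) := by
          congr 1
          have : ∀ t : ℝ, (ENNReal.ofReal lam * ENNReal.ofReal (w b t * |g lam h t|)) ^ p
              = ENNReal.ofReal lam ^ p * (ENNReal.ofReal (w b t * |g lam h t|)) ^ p := fun t =>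
            ENNReal.mul_rpow_of_nonneg _ _ hp0.le
          simp only [this]
          rw [lintegral_const_mul _ ((measurable_Hnn b (measurable_g lam hh)).pow_const _),
            ENNReal.mul_rpow_of_nonneg _ _ (by positivity : (0:ℝ) ≤ 1/p),
            hpow _ ENNReal.ofReal_ne_top]
  calc Xnn ^ (1/p) + Ynn ^ (1/p)
      ≤ cbA * Znn ^ (1/p) + (Znn ^ (1/p) + ENNReal.ofReal lam * (cbA * Znn ^ (1/p))) := by
        apply add_le_add hX
        exact hY.trans (add_le_add_right (mul_le_mul_right hX _) _)
    _ = (cbA + (1 + ENNReal.ofReal lam * cbA)) * Znn ^ (1/p) := by ring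

end Final
end Stmt1Aux

/-- Scalar core of Theorem 3.5 of the paper: weighted maximal regularity for the
shifted ODE `g' + λ g = h` on the whole time line, with `g` given by the causal
convolution `g(t) = ∫_{-∞}^t e^{-λ(t-s)} h(s) ds`.  Local absolute continuity of `g`
is expressed through the fundamental theorem of calculus representation with a
locally integrable derivative `g'`. -/
theorem stmt_1 (lam : ℝ) (hlam : 0 < lam) (p : ℝ) (hp : 1 < p) (b : ℝ) (hb : 0 ≤ b) :
    ∃ C > 0, ∀ h : ℝ → ℝ, Measurable h →
      Integrable (fun t => (Real.sqrt (1 + t ^ 2) ^ b * |h t|) ^ p) →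
      (∀ t : ℝ, IntegrableOn (fun s => Real.exp (-lam * (t - s)) * h s) (Iio t)) ∧
      ∃ g' : ℝ → ℝ, LocallyIntegrable g' volume ∧
        (∀ a c : ℝ,
          (∫ s in a..c, g' s) =
            (∫ s in Iio c, Real.exp (-lam * (c - s)) * h s)
              - ∫ s in Iio a, Real.exp (-lam * (a - s)) * h s) ∧
        (∀ᵐ t : ℝ,
          g' t + lam * (∫ s in Iio t, Real.exp (-lam * (t - s)) * h s) = h t) ∧
        (∫ t : ℝ,
            (Real.sqrt (1 + t ^ 2) ^ b *
              |∫ s in Iio t, Real.exp (-lam * (t - s)) * h s|) ^ p) ^ (1 / p)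
          + (∫ t : ℝ, (Real.sqrt (1 + t ^ 2) ^ b * |g' t|) ^ p) ^ (1 / p)
          ≤ C * (∫ t : ℝ, (Real.sqrt (1 + t ^ 2) ^ b * |h t|) ^ p) ^ (1 / p) := by
  have hp0 : (0:ℝ) < p := lt_trans zero_lt_one hp
  set cbA := ENNReal.ofReal (Real.sqrt 2 ^ b) * Stmt1Aux.Anum lam b with hcbA
  have hcbAne : cbA ≠ ⊤ :=
    ENNReal.mul_ne_top ENNReal.ofReal_ne_top (Stmt1Aux.Anum_lt_top hlam hb).ne
  set Ce := cbA + (1 + ENNReal.ofReal lam * cbA) with hCe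
  have hCene : Ce ≠ ⊤ := by
    rw [hCe]
    exact ENNReal.add_ne_top.2 ⟨hcbAne, ENNReal.add_ne_top.2
      ⟨ENNReal.one_ne_top, ENNReal.mul_ne_top ENNReal.ofReal_ne_top hcbAne⟩⟩
  have hCpos : 0 < Ce.toReal := by
    have h1 : (1:ENNReal) ≤ Ce := le_trans le_self_add le_add_self
    have h2 := ENNReal.toReal_mono hCene h1
    simp only [ENNReal.toReal_one] at h2
    linarith
  refine ⟨Ce.toReal, hCpos, ?_⟩
  intro h hh hInt
  have Hfin : ∫⁻ s, (ENNReal.ofReal (Stmt1Aux.w b s * |h s|)) ^ p ≠ ⊤ := by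
    have h1 := hInt.hasFiniteIntegral
    rw [hasFiniteIntegral_iff_norm] at h1
    have heq : ∀ s : ℝ, (ENNReal.ofReal (Stmt1Aux.w b s * |h s|)) ^ p
        = ENNReal.ofReal ‖(Real.sqrt (1 + s ^ 2) ^ b * |h s|) ^ p‖ := by
      intro s
      rw [ENNReal.ofReal_rpow_of_nonneg
        (mul_nonneg (Stmt1Aux.w_nonneg b s) (abs_nonneg _)) hp0.le,
        Real.norm_eq_abs,
        abs_of_nonneg (by positivity : (0:ℝ) ≤ (Real.sqrt (1 + s ^ 2) ^ b * |h s|) ^ p)]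
      rfl
    simp only [heq]
    exact h1.ne
  refine ⟨fun t => Stmt1Aux.integrableOn_Iio_conv hlam hp hb hh Hfin t,
    fun t => h t - lam * Stmt1Aux.g lam h t, ?_, ?_, ?_, ?_⟩
  · have hloc : LocallyIntegrable h volume :=
      Stmt1Aux.locallyIntegrable_of_fin hp hb hh Hfin
    have hgloc : LocallyIntegrable (Stmt1Aux.g lam h) volume :=
      Stmt1Aux.locallyIntegrable_of_fin hp hb (Stmt1Aux.measurable_g lam hh)
        (Stmt1Aux.Gfin hlam hp hb hh Hfin)
    exact hloc.sub (hgloc.smul lam)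
  · intro a c
    exact Stmt1Aux.ftc_full hlam hp hb hh Hfin a c
  · apply Filter.Eventually.of_forall
    intro t
    show h t - lam * Stmt1Aux.g lam h t + lam * Stmt1Aux.g lam h t = h t
    ring
  · show (∫ t : ℝ, (Stmt1Aux.w b t * |Stmt1Aux.g lam h t|) ^ p) ^ (1/p)
      + (∫ t : ℝ, (Stmt1Aux.w b t * |h t - lam * Stmt1Aux.g lam h t|) ^ p) ^ (1/p)
      ≤ Ce.toReal * (∫ t : ℝ, (Stmt1Aux.w b t * |h t|) ^ p) ^ (1/p)
    rw [Stmt1Aux.integral_eq_toReal hp (Stmt1Aux.measurable_g lam hh),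
      Stmt1Aux.integral_eq_toReal hp (f := fun t => h t - lam * Stmt1Aux.g lam h t) (hh.sub ((Stmt1Aux.measurable_g lam hh).const_mul lam)),
      Stmt1Aux.integral_eq_toReal hp hh]
    have hfb := Stmt1Aux.final_bound hlam hp hb hh Hfin
    rw [← hcbA, ← hCe] at hfb
    set Xnn := ∫⁻ t, (ENNReal.ofReal (Stmt1Aux.w b t * |Stmt1Aux.g lam h t|)) ^ p with hXnn
    set Ynn := ∫⁻ t, (ENNReal.ofReal (Stmt1Aux.w b t * |h t - lam * Stmt1Aux.g lam h t|)) ^ p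
      with hYnn
    set Znn := ∫⁻ t, (ENNReal.ofReal (Stmt1Aux.w b t * |h t|)) ^ p with hZnn
    have hZtop : Znn ^ (1/p) ≠ ⊤ := (ENNReal.rpow_lt_top_of_nonneg (by positivity) Hfin).ne
    have hRHSfin : Ce * Znn ^ (1/p) ≠ ⊤ := ENNReal.mul_ne_top hCene hZtop
    have hXtop : Xnn ^ (1/p) ≠ ⊤ := ne_top_of_le_ne_top hRHSfin (le_trans le_self_add hfb)
    have hYtop : Ynn ^ (1/p) ≠ ⊤ := ne_top_of_le_ne_top hRHSfin (le_trans le_add_self hfb)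
    rw [ENNReal.toReal_rpow, ENNReal.toReal_rpow, ENNReal.toReal_rpow,
      ← ENNReal.toReal_add hXtop hYtop, ← ENNReal.toReal_mul]
    exact ENNReal.toReal_mono hRHSfin hfb
end

section
/- Let 1 < p < ∞, let p' = p/(p−1), and let b ≥ 0 and ℓ > 1 satisfy bp' > 1 and (ℓ − b)p > 1. Then there is a constant C = C(p, b, ℓ), independent of T, such that for every T ∈ (0,∞) and every measurable h : (0,T) → [0,∞), the function g(t) := ∫_0^t min(1, (t−s)^{−ℓ}) h(s) ds satisfies (∫_0^T (⟨t⟩^b g(t))^p dt)^{1/p} ≤ C (∫_0^T (⟨t⟩^b h(t))^p dt)^{1/p}. -/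
open MeasureTheory Set
open scoped ENNReal

private lemma one_le_sq (t : ℝ) : 1 ≤ Real.sqrt (1 + t ^ 2) :=
  Real.one_le_sqrt.mpr (by nlinarith [sq_nonneg t])

private lemma sq_pos' (t : ℝ) : 0 < Real.sqrt (1 + t ^ 2) :=
  lt_of_lt_of_le one_pos (one_le_sq t)

private lemma aux_sq_le_min {β : ℝ} (hβ : 0 < β) {s : ℝ} (hs : 0 < s) :
    Real.sqrt (1 + s ^ 2) ^ (-β) ≤ min 1 (s ^ (-β)) := by
  refine le_min (Real.rpow_le_one_of_one_le_of_nonpos (one_le_sq s) (by linarith)) ?_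
  refine Real.rpow_le_rpow_of_nonpos hs ?_ (by linarith)
  calc s = Real.sqrt (s ^ 2) := (Real.sqrt_sq hs.le).symm
    _ ≤ Real.sqrt (1 + s ^ 2) := Real.sqrt_le_sqrt (by linarith)

private lemma aux_fin {β : ℝ} (hβ : 1 < β) :
    ∫⁻ u in Ioi (0:ℝ), ENNReal.ofReal (min 1 (u ^ (-β))) < ∞ := by
  have hsplit : Ioi (0:ℝ) = Ioc 0 1 ∪ Ioi 1 := by
    rw [Ioc_union_Ioi_eq_Ioi]; exact zero_le_one
  rw [hsplit]
  refine lt_of_le_of_lt (lintegral_union_le _ _ _) (ENNReal.add_lt_top.mpr ⟨?_, ?_⟩)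
  · calc ∫⁻ u in Ioc (0:ℝ) 1, ENNReal.ofReal (min 1 (u ^ (-β)))
        ≤ ∫⁻ _ in Ioc (0:ℝ) 1, 1 := by
          refine setLIntegral_mono measurable_const fun u _ => ?_
          exact ENNReal.ofReal_le_one.mpr (min_le_left _ _)
      _ < ∞ := by simp [setLIntegral_const]
  · calc ∫⁻ u in Ioi (1:ℝ), ENNReal.ofReal (min 1 (u ^ (-β)))
        ≤ ∫⁻ u in Ioi (1:ℝ), ENNReal.ofReal (u ^ (-β)) := by
          refine setLIntegral_mono (by fun_prop) fun u _ => ?_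
          exact ENNReal.ofReal_le_ofReal (min_le_right _ _)
      _ < ∞ := (integrableOn_Ioi_rpow_of_lt (by linarith) one_pos).setLIntegral_lt_top

private lemma aux_wfin {β : ℝ} (hβ : 1 < β) :
    ∫⁻ s in Ioi (0:ℝ), ENNReal.ofReal (Real.sqrt (1 + s ^ 2) ^ (-β)) < ∞ := by
  refine lt_of_le_of_lt (setLIntegral_mono (by fun_prop) fun s hs => ?_) (aux_fin hβ)
  exact ENNReal.ofReal_le_ofReal (aux_sq_le_min (by linarith) hs)

private lemma kerA {ℓ : ℝ} (hℓ : 0 < ℓ) {t s : ℝ} (hs : 0 < s) (hst : s ≤ t / 2) (h2 : s < t) :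
    min 1 ((t - s) ^ (-ℓ)) ≤ Real.sqrt 8 ^ ℓ * Real.sqrt (1 + t ^ 2) ^ (-ℓ) := by
  have ht : 0 < t := lt_trans hs h2
  have hq := sq_pos' t
  have h8 : (0:ℝ) < Real.sqrt 8 := Real.sqrt_pos.mpr (by norm_num)
  rw [Real.rpow_neg hq.le, ← div_eq_mul_inv, ← Real.div_rpow h8.le hq.le]
  rcases le_or_gt (1 + t ^ 2) 8 with hc | hc
  · refine le_trans (min_le_left _ _) (Real.one_le_rpow ?_ hℓ.le)
    rw [le_div_iff₀ hq, one_mul]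
    exact Real.sqrt_le_sqrt hc
  · have ht1 : 1 < t := by nlinarith
    have hts : (0:ℝ) < t / 2 := by linarith
    refine le_trans (le_trans (min_le_right _ _)
      (Real.rpow_le_rpow_of_nonpos hts (by linarith) (by linarith))) ?_
    rw [Real.rpow_neg hts.le, ← Real.inv_rpow hts.le]
    refine Real.rpow_le_rpow (by positivity) ?_ hℓ.le
    have key : Real.sqrt (1 + t ^ 2) ≤ Real.sqrt 8 * (t / 2) := by
      have h1 : Real.sqrt (1 + t ^ 2) ≤ Real.sqrt (8 * (t / 2) ^ 2) :=
        Real.sqrt_le_sqrt (by nlinarith)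
      rwa [Real.sqrt_mul (by norm_num) _, Real.sqrt_sq hts.le] at h1
    rw [le_div_iff₀ hq]
    have h2' : (t / 2)⁻¹ * Real.sqrt (1 + t ^ 2) ≤ (t / 2)⁻¹ * (Real.sqrt 8 * (t / 2)) :=
      mul_le_mul_of_nonneg_left key (by positivity)
    have h3 : (t / 2)⁻¹ * (Real.sqrt 8 * (t / 2)) = Real.sqrt 8 := by field_simp
    linarith

private lemma kerB {b : ℝ} (hb : 0 ≤ b) {t s : ℝ} (hts : t / 2 < s) (h2 : s < t) (ht : 0 < t) :
    Real.sqrt (1 + t ^ 2) ^ b ≤ 2 ^ b * Real.sqrt (1 + s ^ 2) ^ b := by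
  have hs : 0 < s := lt_of_lt_of_le (by linarith) hts.le
  have key : Real.sqrt (1 + t ^ 2) ≤ 2 * Real.sqrt (1 + s ^ 2) := by
    have h1 : Real.sqrt (1 + t ^ 2) ≤ Real.sqrt (2 ^ 2 * (1 + s ^ 2)) :=
      Real.sqrt_le_sqrt (by nlinarith)
    rwa [Real.sqrt_mul (by norm_num) _, Real.sqrt_sq (by norm_num)] at h1
  calc Real.sqrt (1 + t ^ 2) ^ b ≤ (2 * Real.sqrt (1 + s ^ 2)) ^ b :=
        Real.rpow_le_rpow (Real.sqrt_nonneg _) key hb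
    _ = 2 ^ b * Real.sqrt (1 + s ^ 2) ^ b := Real.mul_rpow (by norm_num) (Real.sqrt_nonneg _)

private lemma realA {b ℓ : ℝ} (hb : 0 ≤ b) (hℓ : 0 < ℓ) {t s : ℝ} (hs : 0 < s)
    (hst : s ≤ t / 2) (h2 : s < t) {x : ℝ} (hx : 0 ≤ x) :
    Real.sqrt (1 + t ^ 2) ^ b * (min 1 ((t - s) ^ (-ℓ)) * x) ≤
      (Real.sqrt 8 ^ ℓ * Real.sqrt (1 + t ^ 2) ^ (b - ℓ)) *
        (Real.sqrt (1 + s ^ 2) ^ (-b) * (Real.sqrt (1 + s ^ 2) ^ b * x)) := by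
  have e1 : Real.sqrt (1 + s ^ 2) ^ (-b) * (Real.sqrt (1 + s ^ 2) ^ b * x) = x := by
    rw [← mul_assoc, ← Real.rpow_add (sq_pos' s)]; simp
  rw [e1]
  have e2 : Real.sqrt 8 ^ ℓ * Real.sqrt (1 + t ^ 2) ^ (b - ℓ) =
      Real.sqrt (1 + t ^ 2) ^ b * (Real.sqrt 8 ^ ℓ * Real.sqrt (1 + t ^ 2) ^ (-ℓ)) := by
    rw [show b - ℓ = b + -ℓ by ring, Real.rpow_add (sq_pos' t)]; ring
  rw [e2, mul_assoc]
  exact mul_le_mul_of_nonneg_left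
    (mul_le_mul_of_nonneg_right (kerA hℓ hs hst h2) hx)
    (Real.rpow_nonneg (Real.sqrt_nonneg _) _)

private lemma realB {b ℓ : ℝ} (hb : 0 ≤ b) {t s : ℝ} (hts : t / 2 < s) (h2 : s < t)
    (ht : 0 < t) {x : ℝ} (hx : 0 ≤ x) :
    Real.sqrt (1 + t ^ 2) ^ b * (min 1 ((t - s) ^ (-ℓ)) * x) ≤
      2 ^ b * (min 1 ((t - s) ^ (-ℓ)) * (Real.sqrt (1 + s ^ 2) ^ b * x)) := by
  have hk : 0 ≤ min 1 ((t - s) ^ (-ℓ)) :=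
    le_min zero_le_one (Real.rpow_nonneg (by linarith) _)
  have h0 := mul_le_mul_of_nonneg_left (kerB hb hts h2 ht) (mul_nonneg hk hx)
  calc Real.sqrt (1 + t ^ 2) ^ b * (min 1 ((t - s) ^ (-ℓ)) * x)
      = min 1 ((t - s) ^ (-ℓ)) * x * Real.sqrt (1 + t ^ 2) ^ b := by ring
    _ ≤ min 1 ((t - s) ^ (-ℓ)) * x * (2 ^ b * Real.sqrt (1 + s ^ 2) ^ b) := h0
    _ = 2 ^ b * (min 1 ((t - s) ^ (-ℓ)) * (Real.sqrt (1 + s ^ 2) ^ b * x)) := by ring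

private lemma kernel_refl {ℓ : ℝ} (t : ℝ) :
    ∫⁻ s in Ioo (0:ℝ) t, ENNReal.ofReal (min 1 ((t - s) ^ (-ℓ)))
      ≤ ∫⁻ u in Ioi (0:ℝ), ENNReal.ofReal (min 1 (u ^ (-ℓ))) := by
  have hpre : (fun s : ℝ => t - s) ⁻¹' Ioo (0:ℝ) t = Ioo (0:ℝ) t := by
    ext x; simp only [mem_preimage, mem_Ioo]
    constructor <;> rintro ⟨h1, h2⟩ <;> constructor <;> linarith
  have := (Measure.measurePreserving_sub_left (volume : Measure ℝ) t).setLIntegral_comp_preimage_emb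
    (MeasurableEquiv.subLeft t).measurableEmbedding
    (fun u => ENNReal.ofReal (min 1 (u ^ (-ℓ)))) (Ioo 0 t)
  rw [hpre] at this
  calc ∫⁻ s in Ioo (0:ℝ) t, ENNReal.ofReal (min 1 ((t - s) ^ (-ℓ)))
      = ∫⁻ u in Ioo (0:ℝ) t, ENNReal.ofReal (min 1 (u ^ (-ℓ))) := this
    _ ≤ _ := lintegral_mono_set Ioo_subset_Ioi_self

private lemma kernel_trans {ℓ : ℝ} (s T : ℝ) :
    ∫⁻ t in Ioo s T, ENNReal.ofReal (min 1 ((t - s) ^ (-ℓ)))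
      ≤ ∫⁻ u in Ioi (0:ℝ), ENNReal.ofReal (min 1 (u ^ (-ℓ))) := by
  have hpre : (fun t : ℝ => t - s) ⁻¹' Ioo (0:ℝ) (T - s) = Ioo s T := by
    ext x; simp only [mem_preimage, mem_Ioo]
    constructor <;> rintro ⟨h1, h2⟩ <;> constructor <;> linarith
  have := (measurePreserving_sub_right (volume : Measure ℝ) s).setLIntegral_comp_preimage_emb
    (MeasurableEquiv.subRight s).measurableEmbedding
    (fun u => ENNReal.ofReal (min 1 (u ^ (-ℓ)))) (Ioo 0 (T - s))
  rw [hpre] at this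
  calc ∫⁻ t in Ioo s T, ENNReal.ofReal (min 1 ((t - s) ^ (-ℓ)))
      = ∫⁻ u in Ioo (0:ℝ) (T - s), ENNReal.ofReal (min 1 (u ^ (-ℓ))) := this
    _ ≤ _ := lintegral_mono_set Ioo_subset_Ioi_self

private lemma meas_param {g : ℝ → ℝ≥0∞} (hg : Measurable g) (ℓ : ℝ) :
    Measurable (fun t : ℝ => ∫⁻ s in Ioo (0:ℝ) t,
      ENNReal.ofReal (min 1 ((t - s) ^ (-ℓ))) * g s) := by
  have hker : Measurable (fun q : ℝ × ℝ =>
      ENNReal.ofReal (min 1 ((q.1 - q.2) ^ (-ℓ))) * g q.2) := by fun_prop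
  have hset : MeasurableSet {q : ℝ × ℝ | 0 < q.2 ∧ q.2 < q.1} :=
    (measurableSet_lt measurable_const measurable_snd).inter
      (measurableSet_lt measurable_snd measurable_fst)
  have heq : (fun t : ℝ => ∫⁻ s in Ioo (0:ℝ) t,
        ENNReal.ofReal (min 1 ((t - s) ^ (-ℓ))) * g s)
      = fun t : ℝ => ∫⁻ s, ({q : ℝ × ℝ | 0 < q.2 ∧ q.2 < q.1}).indicator
          (fun q => ENNReal.ofReal (min 1 ((q.1 - q.2) ^ (-ℓ))) * g q.2) (t, s) := by
    funext t
    rw [← lintegral_indicator measurableSet_Ioo]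
    refine lintegral_congr fun s => ?_
    by_cases hmem : s ∈ Ioo (0:ℝ) t
    · rw [Set.indicator_of_mem hmem, Set.indicator_of_mem (by exact ⟨hmem.1, hmem.2⟩)]
    · rw [Set.indicator_of_notMem hmem, Set.indicator_of_notMem
        (by simpa [Set.mem_setOf_eq, Set.mem_Ioo] using hmem)]
  rw [heq]
  exact Measurable.lintegral_prod_right (hker.indicator hset)

private lemma ptA {b ℓ : ℝ} (hb : 0 ≤ b) (hℓ : 0 < ℓ) {t s x : ℝ} (hs : 0 < s)
    (hst : s ≤ t / 2) (h2 : s < t) (hx : 0 ≤ x) :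
    ENNReal.ofReal (Real.sqrt (1 + t ^ 2) ^ b) * ENNReal.ofReal (min 1 ((t - s) ^ (-ℓ)) * x) ≤
      ENNReal.ofReal (Real.sqrt 8 ^ ℓ * Real.sqrt (1 + t ^ 2) ^ (b - ℓ)) *
        (ENNReal.ofReal (Real.sqrt (1 + s ^ 2) ^ (-b)) *
          ENNReal.ofReal (Real.sqrt (1 + s ^ 2) ^ b * x)) := by
  rw [← ENNReal.ofReal_mul (by positivity : (0:ℝ) ≤ Real.sqrt (1 + s ^ 2) ^ (-b)),
      ← ENNReal.ofReal_mul (by positivity : (0:ℝ) ≤ Real.sqrt 8 ^ ℓ * Real.sqrt (1 + t ^ 2) ^ (b - ℓ)),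
      ← ENNReal.ofReal_mul (by positivity : (0:ℝ) ≤ Real.sqrt (1 + t ^ 2) ^ b)]
  exact ENNReal.ofReal_le_ofReal (realA hb hℓ hs hst h2 hx)

private lemma ptB {b ℓ : ℝ} (hb : 0 ≤ b) {t s x : ℝ} (hts : t / 2 < s) (h2 : s < t)
    (ht : 0 < t) (hx : 0 ≤ x) :
    ENNReal.ofReal (Real.sqrt (1 + t ^ 2) ^ b) * ENNReal.ofReal (min 1 ((t - s) ^ (-ℓ)) * x) ≤
      ENNReal.ofReal (2 ^ b) * (ENNReal.ofReal (min 1 ((t - s) ^ (-ℓ))) *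
        ENNReal.ofReal (Real.sqrt (1 + s ^ 2) ^ b * x)) := by
  have hk : (0:ℝ) ≤ min 1 ((t - s) ^ (-ℓ)) :=
    le_min zero_le_one (Real.rpow_nonneg (by linarith) _)
  rw [← ENNReal.ofReal_mul hk, ← ENNReal.ofReal_mul (by positivity : (0:ℝ) ≤ (2:ℝ) ^ b),
      ← ENNReal.ofReal_mul (by positivity : (0:ℝ) ≤ Real.sqrt (1 + t ^ 2) ^ b)]
  exact ENNReal.ofReal_le_ofReal (realB hb hts h2 ht hx)

/-- Scalar kernel estimate behind (5.10)-(5.12) of the paper: the convolution with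
the kernel `min(1, (t-s)^{-ℓ})` is bounded on the time-weighted `L_p` space, with a
constant independent of the time horizon `T`. -/
theorem stmt_2 (p : ℝ) (hp : 1 < p) (b ℓ : ℝ) (hb : 0 ≤ b) (hℓ : 1 < ℓ)
    (hbp : 1 < b * (p / (p - 1))) (hℓb : 1 < (ℓ - b) * p) :
    ∃ C > 0, ∀ T : ℝ, 0 < T → ∀ h : ℝ → ℝ, Measurable h → (∀ s, 0 ≤ h s) →
      (∫⁻ t in Ioo (0:ℝ) T,
          (ENNReal.ofReal (Real.sqrt (1 + t ^ 2) ^ b) *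
            ∫⁻ s in Ioo (0:ℝ) t,
              ENNReal.ofReal (min 1 ((t - s) ^ (-ℓ)) * h s)) ^ p) ^ (1 / p)
        ≤ ENNReal.ofReal C *
          (∫⁻ t in Ioo (0:ℝ) T,
            ENNReal.ofReal (Real.sqrt (1 + t ^ 2) ^ b * h t) ^ p) ^ (1 / p) := by
  have hp0 : (0:ℝ) < p := by linarith
  have hppos : (0:ℝ) < 1 / p := by positivity
  have hpc1 : 1 < p / (p - 1) := by
    rw [lt_div_iff₀ (by linarith)]; linarith
  have hpc0 : (0:ℝ) < p / (p - 1) := by linarith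
  have hsum : 1 / (p / (p - 1)) + 1 / p = 1 := by
    rw [one_div_div]; field_simp; ring
  -- finiteness of the three master integrals
  have hM : (∫⁻ u in Ioi (0:ℝ), ENNReal.ofReal (min 1 (u ^ (-ℓ)))) < ∞ := aux_fin hℓ
  have hK1 : (∫⁻ s in Ioi (0:ℝ),
      ENNReal.ofReal (Real.sqrt (1 + s ^ 2) ^ (-b)) ^ (p / (p - 1))) < ∞ := by
    have e : ∀ s : ℝ, ENNReal.ofReal (Real.sqrt (1 + s ^ 2) ^ (-b)) ^ (p / (p - 1))
        = ENNReal.ofReal (Real.sqrt (1 + s ^ 2) ^ (-(b * (p / (p - 1))))) := by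
      intro s
      rw [ENNReal.ofReal_rpow_of_nonneg (Real.rpow_nonneg (Real.sqrt_nonneg _) _) hpc0.le,
        ← Real.rpow_mul (Real.sqrt_nonneg _)]
      ring_nf
    rw [lintegral_congr e]
    exact aux_wfin hbp
  have hK2 : (∫⁻ t in Ioi (0:ℝ),
      ENNReal.ofReal (Real.sqrt 8 ^ ℓ * Real.sqrt (1 + t ^ 2) ^ (b - ℓ)) ^ p) < ∞ := by
    have e : ∀ t : ℝ, ENNReal.ofReal (Real.sqrt 8 ^ ℓ * Real.sqrt (1 + t ^ 2) ^ (b - ℓ)) ^ p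
        = ENNReal.ofReal (Real.sqrt 8 ^ (ℓ * p)) *
            ENNReal.ofReal (Real.sqrt (1 + t ^ 2) ^ (-((ℓ - b) * p))) := by
      intro t
      rw [ENNReal.ofReal_rpow_of_nonneg (by positivity) hp0.le,
        Real.mul_rpow (by positivity) (by positivity),
        ← Real.rpow_mul (Real.sqrt_nonneg _), ← Real.rpow_mul (Real.sqrt_nonneg _),
        ENNReal.ofReal_mul (by positivity), show (b - ℓ) * p = -((ℓ - b) * p) by ring]
    rw [lintegral_congr e, lintegral_const_mul' _ _ ENNReal.ofReal_ne_top]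
    exact ENNReal.mul_lt_top ENNReal.ofReal_lt_top (aux_wfin hℓb)
  -- the master constant
  set E : ℝ≥0∞ :=
      (∫⁻ t in Ioi (0:ℝ),
          ENNReal.ofReal (Real.sqrt 8 ^ ℓ * Real.sqrt (1 + t ^ 2) ^ (b - ℓ)) ^ p) ^ (1 / p)
        * (∫⁻ s in Ioi (0:ℝ),
            ENNReal.ofReal (Real.sqrt (1 + s ^ 2) ^ (-b)) ^ (p / (p - 1))) ^ (1 / (p / (p - 1)))
      + ENNReal.ofReal (2 ^ b) *
          ((∫⁻ u in Ioi (0:ℝ), ENNReal.ofReal (min 1 (u ^ (-ℓ)))) ^ (1 / (p / (p - 1)))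
            * (∫⁻ u in Ioi (0:ℝ), ENNReal.ofReal (min 1 (u ^ (-ℓ)))) ^ (1 / p)) with hEdef
  have hE : E < ∞ := by
    rw [hEdef]
    refine ENNReal.add_lt_top.mpr ⟨ENNReal.mul_lt_top ?_ ?_,
      ENNReal.mul_lt_top ENNReal.ofReal_lt_top (ENNReal.mul_lt_top ?_ ?_)⟩
    · exact ENNReal.rpow_lt_top_of_nonneg (by positivity) hK2.ne
    · exact ENNReal.rpow_lt_top_of_nonneg (by positivity) hK1.ne
    · exact ENNReal.rpow_lt_top_of_nonneg (by positivity) hM.ne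
    · exact ENNReal.rpow_lt_top_of_nonneg (by positivity) hM.ne
  refine ⟨E.toReal + 1, by positivity, ?_⟩
  intro T hT h hmeas hpos
  have hfm : Measurable fun s : ℝ => ENNReal.ofReal (Real.sqrt (1 + s ^ 2) ^ b * h s) := by
    fun_prop
  -- pointwise splitting of the weighted inner integral
  have key : ∀ t ∈ Ioo (0:ℝ) T,
      ENNReal.ofReal (Real.sqrt (1 + t ^ 2) ^ b) *
          (∫⁻ s in Ioo (0:ℝ) t, ENNReal.ofReal (min 1 ((t - s) ^ (-ℓ)) * h s))
        ≤ ENNReal.ofReal (Real.sqrt 8 ^ ℓ * Real.sqrt (1 + t ^ 2) ^ (b - ℓ)) *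
              (∫⁻ s in Ioo (0:ℝ) T, ENNReal.ofReal (Real.sqrt (1 + s ^ 2) ^ (-b)) *
                ENNReal.ofReal (Real.sqrt (1 + s ^ 2) ^ b * h s))
            + ENNReal.ofReal (2 ^ b) *
              ∫⁻ s in Ioo (0:ℝ) t, ENNReal.ofReal (min 1 ((t - s) ^ (-ℓ))) *
                ENNReal.ofReal (Real.sqrt (1 + s ^ 2) ^ b * h s) := by
    rintro t ⟨ht0, htT⟩
    have hsplit : Ioo (0:ℝ) t = Ioc 0 (t / 2) ∪ Ioo (t / 2) t :=
      (Ioc_union_Ioo_eq_Ioo (by linarith) (by linarith)).symm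
    have hdisj : Disjoint (Ioc (0:ℝ) (t / 2)) (Ioo (t / 2) t) := by
      rw [Set.disjoint_left]; rintro x ⟨_, hx⟩ ⟨hx', _⟩; exact absurd hx (not_le.mpr hx')
    conv_lhs => rw [hsplit]
    rw [lintegral_union measurableSet_Ioo hdisj, mul_add]
    refine add_le_add ?_ ?_
    · rw [← lintegral_const_mul _ (by fun_prop :
        Measurable fun s : ℝ => ENNReal.ofReal (min 1 ((t - s) ^ (-ℓ)) * h s))]
      refine le_trans (setLIntegral_mono' measurableSet_Ioc fun s hs =>
        ptA hb (by linarith) (mem_Ioc.mp hs).1 (mem_Ioc.mp hs).2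
          (lt_of_le_of_lt (mem_Ioc.mp hs).2 (by linarith : t / 2 < t)) (hpos s)) ?_
      refine le_trans (lintegral_mono_set fun s hs => mem_Ioo.mpr
        ⟨(mem_Ioc.mp hs).1, lt_of_le_of_lt (mem_Ioc.mp hs).2 (by linarith : t / 2 < T)⟩) ?_
      exact le_of_eq (lintegral_const_mul _ (by fun_prop))
    · rw [← lintegral_const_mul _ (by fun_prop :
        Measurable fun s : ℝ => ENNReal.ofReal (min 1 ((t - s) ^ (-ℓ)) * h s))]
      refine le_trans (setLIntegral_mono' measurableSet_Ioo fun s hs =>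
        ptB hb (mem_Ioo.mp hs).1 (mem_Ioo.mp hs).2 ht0 (hpos s)) ?_
      rw [lintegral_const_mul _ (by fun_prop :
        Measurable fun s : ℝ => ENNReal.ofReal (min 1 ((t - s) ^ (-ℓ))) *
          ENNReal.ofReal (Real.sqrt (1 + s ^ 2) ^ b * h s))]
      refine mul_le_mul_right (lintegral_mono_set fun s hs => mem_Ioo.mpr
        ⟨lt_trans (by linarith : (0:ℝ) < t / 2) (mem_Ioo.mp hs).1, (mem_Ioo.mp hs).2⟩) _
  -- Hoelder estimate for the weight integral J
  have hJ : (∫⁻ s in Ioo (0:ℝ) T, ENNReal.ofReal (Real.sqrt (1 + s ^ 2) ^ (-b)) *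
        ENNReal.ofReal (Real.sqrt (1 + s ^ 2) ^ b * h s))
      ≤ (∫⁻ s in Ioi (0:ℝ),
            ENNReal.ofReal (Real.sqrt (1 + s ^ 2) ^ (-b)) ^ (p / (p - 1))) ^ (1 / (p / (p - 1))) *
          (∫⁻ s in Ioo (0:ℝ) T,
            ENNReal.ofReal (Real.sqrt (1 + s ^ 2) ^ b * h s) ^ p) ^ (1 / p) := by
    have e : ∀ s : ℝ,
        ENNReal.ofReal (Real.sqrt (1 + s ^ 2) ^ (-b)) *
            ENNReal.ofReal (Real.sqrt (1 + s ^ 2) ^ b * h s)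
          = (ENNReal.ofReal (Real.sqrt (1 + s ^ 2) ^ (-b)) ^ (p / (p - 1))) ^ (1 / (p / (p - 1))) *
              (ENNReal.ofReal (Real.sqrt (1 + s ^ 2) ^ b * h s) ^ p) ^ (1 / p) := by
      intro s
      rw [← ENNReal.rpow_mul, ← ENNReal.rpow_mul, mul_one_div_cancel hpc0.ne',
        mul_one_div_cancel hp0.ne', ENNReal.rpow_one, ENNReal.rpow_one]
    rw [lintegral_congr e]
    refine le_trans (ENNReal.lintegral_mul_norm_pow_le (by fun_prop) (by fun_prop)
      (by positivity) (by positivity) hsum) ?_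
    exact mul_le_mul_left (ENNReal.rpow_le_rpow
      (lintegral_mono_set Ioo_subset_Ioi_self) (by positivity)) _
  -- Hoelder estimate for the convolution term
  have innerB : ∀ t : ℝ,
      (∫⁻ s in Ioo (0:ℝ) t, ENNReal.ofReal (min 1 ((t - s) ^ (-ℓ))) *
          ENNReal.ofReal (Real.sqrt (1 + s ^ 2) ^ b * h s))
        ≤ (∫⁻ u in Ioi (0:ℝ), ENNReal.ofReal (min 1 (u ^ (-ℓ)))) ^ (1 / (p / (p - 1))) *
            (∫⁻ s in Ioo (0:ℝ) t, ENNReal.ofReal (min 1 ((t - s) ^ (-ℓ))) *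
              ENNReal.ofReal (Real.sqrt (1 + s ^ 2) ^ b * h s) ^ p) ^ (1 / p) := by
    intro t
    have e : ∀ s : ℝ,
        ENNReal.ofReal (min 1 ((t - s) ^ (-ℓ))) *
            ENNReal.ofReal (Real.sqrt (1 + s ^ 2) ^ b * h s)
          = (ENNReal.ofReal (min 1 ((t - s) ^ (-ℓ)))) ^ (1 / (p / (p - 1))) *
              (ENNReal.ofReal (min 1 ((t - s) ^ (-ℓ))) *
                ENNReal.ofReal (Real.sqrt (1 + s ^ 2) ^ b * h s) ^ p) ^ (1 / p) := by
      intro s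
      rw [ENNReal.mul_rpow_of_nonneg _ _ hppos.le, ← ENNReal.rpow_mul,
        mul_one_div_cancel hp0.ne', ENNReal.rpow_one, ← mul_assoc,
        ← ENNReal.rpow_add_of_nonneg _ _ (by positivity) (by positivity), hsum,
        ENNReal.rpow_one]
    rw [lintegral_congr e]
    refine le_trans (ENNReal.lintegral_mul_norm_pow_le (by fun_prop) (by fun_prop)
      (by positivity) (by positivity) hsum) ?_
    exact mul_le_mul_left (ENNReal.rpow_le_rpow (kernel_refl t) (by positivity)) _
  have pointB : ∀ t : ℝ,
      (∫⁻ s in Ioo (0:ℝ) t, ENNReal.ofReal (min 1 ((t - s) ^ (-ℓ))) *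
          ENNReal.ofReal (Real.sqrt (1 + s ^ 2) ^ b * h s)) ^ p
        ≤ (∫⁻ u in Ioi (0:ℝ), ENNReal.ofReal (min 1 (u ^ (-ℓ)))) ^ (1 / (p / (p - 1)) * p) *
            ∫⁻ s in Ioo (0:ℝ) t, ENNReal.ofReal (min 1 ((t - s) ^ (-ℓ))) *
              ENNReal.ofReal (Real.sqrt (1 + s ^ 2) ^ b * h s) ^ p := by
    intro t
    refine le_trans (ENNReal.rpow_le_rpow (innerB t) hp0.le) (le_of_eq ?_)
    rw [ENNReal.mul_rpow_of_nonneg _ _ hp0.le, ← ENNReal.rpow_mul, ← ENNReal.rpow_mul,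
      one_div_mul_cancel hp0.ne', ENNReal.rpow_one]
  -- Fubini
  have fub : (∫⁻ t in Ioo (0:ℝ) T, ∫⁻ s in Ioo (0:ℝ) t,
        ENNReal.ofReal (min 1 ((t - s) ^ (-ℓ))) *
          ENNReal.ofReal (Real.sqrt (1 + s ^ 2) ^ b * h s) ^ p)
      ≤ (∫⁻ u in Ioi (0:ℝ), ENNReal.ofReal (min 1 (u ^ (-ℓ)))) *
          ∫⁻ s in Ioo (0:ℝ) T, ENNReal.ofReal (Real.sqrt (1 + s ^ 2) ^ b * h s) ^ p := by
    have hfp : ∀ s : ℝ, ENNReal.ofReal (Real.sqrt (1 + s ^ 2) ^ b * h s) ^ p ≠ ⊤ :=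
      fun s => (ENNReal.rpow_lt_top_of_nonneg hp0.le ENNReal.ofReal_ne_top).ne
    have hDm : Measurable (Function.uncurry (fun t s : ℝ =>
        if s < t then ENNReal.ofReal (min 1 ((t - s) ^ (-ℓ))) *
          ENNReal.ofReal (Real.sqrt (1 + s ^ 2) ^ b * h s) ^ p else 0)) := by
      have huc : Function.uncurry (fun t s : ℝ =>
          if s < t then ENNReal.ofReal (min 1 ((t - s) ^ (-ℓ))) *
            ENNReal.ofReal (Real.sqrt (1 + s ^ 2) ^ b * h s) ^ p else 0)
          = fun q : ℝ × ℝ => if q.2 < q.1 then ENNReal.ofReal (min 1 ((q.1 - q.2) ^ (-ℓ))) *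
              ENNReal.ofReal (Real.sqrt (1 + q.2 ^ 2) ^ b * h q.2) ^ p else 0 := rfl
      rw [huc]
      exact Measurable.ite (measurableSet_lt measurable_snd measurable_fst)
        (by fun_prop) measurable_const
    have e1 : ∀ t ∈ Ioo (0:ℝ) T,
        (∫⁻ s in Ioo (0:ℝ) t, ENNReal.ofReal (min 1 ((t - s) ^ (-ℓ))) *
            ENNReal.ofReal (Real.sqrt (1 + s ^ 2) ^ b * h s) ^ p)
          = ∫⁻ s in Ioo (0:ℝ) T, (fun t s : ℝ =>
              if s < t then ENNReal.ofReal (min 1 ((t - s) ^ (-ℓ))) *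
                ENNReal.ofReal (Real.sqrt (1 + s ^ 2) ^ b * h s) ^ p else 0) t s := by
      rintro t ⟨ht0, htT⟩
      have hind : ∀ s : ℝ, (if s < t then ENNReal.ofReal (min 1 ((t - s) ^ (-ℓ))) *
            ENNReal.ofReal (Real.sqrt (1 + s ^ 2) ^ b * h s) ^ p else 0)
          = (Iio t).indicator (fun s => ENNReal.ofReal (min 1 ((t - s) ^ (-ℓ))) *
              ENNReal.ofReal (Real.sqrt (1 + s ^ 2) ^ b * h s) ^ p) s := fun s => by
        by_cases hst : s < t
        · rw [if_pos hst, Set.indicator_of_mem (by exact hst)]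
        · rw [if_neg hst, Set.indicator_of_notMem (by simpa using hst)]
      have hset : Iio t ∩ Ioo (0:ℝ) T = Ioo (0:ℝ) t := by
        ext x
        simp only [mem_inter_iff, mem_Iio, mem_Ioo]
        constructor
        · rintro ⟨h1, h2, h3⟩; exact ⟨h2, h1⟩
        · rintro ⟨h1, h2⟩; exact ⟨h2, h1, by linarith⟩
      symm
      calc ∫⁻ s in Ioo (0:ℝ) T, (fun t s : ℝ =>
              if s < t then ENNReal.ofReal (min 1 ((t - s) ^ (-ℓ))) *
                ENNReal.ofReal (Real.sqrt (1 + s ^ 2) ^ b * h s) ^ p else 0) t s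
          = ∫⁻ s in Ioo (0:ℝ) T, (Iio t).indicator
              (fun s => ENNReal.ofReal (min 1 ((t - s) ^ (-ℓ))) *
                ENNReal.ofReal (Real.sqrt (1 + s ^ 2) ^ b * h s) ^ p) s :=
            lintegral_congr hind
        _ = ∫⁻ s in Iio t, (ENNReal.ofReal (min 1 ((t - s) ^ (-ℓ))) *
              ENNReal.ofReal (Real.sqrt (1 + s ^ 2) ^ b * h s) ^ p)
              ∂((volume : Measure ℝ).restrict (Ioo (0:ℝ) T)) :=
            lintegral_indicator measurableSet_Iio _
        _ = ∫⁻ s in Iio t ∩ Ioo (0:ℝ) T, ENNReal.ofReal (min 1 ((t - s) ^ (-ℓ))) *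
              ENNReal.ofReal (Real.sqrt (1 + s ^ 2) ^ b * h s) ^ p := by
            rw [Measure.restrict_restrict measurableSet_Iio]
        _ = ∫⁻ s in Ioo (0:ℝ) t, ENNReal.ofReal (min 1 ((t - s) ^ (-ℓ))) *
              ENNReal.ofReal (Real.sqrt (1 + s ^ 2) ^ b * h s) ^ p := by rw [hset]
    have e2 : ∀ s ∈ Ioo (0:ℝ) T,
        (∫⁻ t in Ioo (0:ℝ) T, (fun t s : ℝ =>
            if s < t then ENNReal.ofReal (min 1 ((t - s) ^ (-ℓ))) *
              ENNReal.ofReal (Real.sqrt (1 + s ^ 2) ^ b * h s) ^ p else 0) t s)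
          ≤ (∫⁻ u in Ioi (0:ℝ), ENNReal.ofReal (min 1 (u ^ (-ℓ)))) *
              ENNReal.ofReal (Real.sqrt (1 + s ^ 2) ^ b * h s) ^ p := by
      rintro s ⟨hs0, hsT⟩
      have hind : ∀ t : ℝ, (if s < t then ENNReal.ofReal (min 1 ((t - s) ^ (-ℓ))) *
            ENNReal.ofReal (Real.sqrt (1 + s ^ 2) ^ b * h s) ^ p else 0)
          = (Ioi s).indicator (fun t => ENNReal.ofReal (min 1 ((t - s) ^ (-ℓ))) *
              ENNReal.ofReal (Real.sqrt (1 + s ^ 2) ^ b * h s) ^ p) t := fun t => by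
        by_cases hst : s < t
        · rw [if_pos hst, Set.indicator_of_mem (by exact hst)]
        · rw [if_neg hst, Set.indicator_of_notMem (by simpa using hst)]
      have hset : Ioi s ∩ Ioo (0:ℝ) T = Ioo s T := by
        ext x
        simp only [mem_inter_iff, mem_Ioi, mem_Ioo]
        constructor
        · rintro ⟨h1, h2, h3⟩; exact ⟨h1, h3⟩
        · rintro ⟨h1, h2⟩; exact ⟨h1, by linarith, h2⟩
      calc ∫⁻ t in Ioo (0:ℝ) T, (fun t s : ℝ =>
              if s < t then ENNReal.ofReal (min 1 ((t - s) ^ (-ℓ))) *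
                ENNReal.ofReal (Real.sqrt (1 + s ^ 2) ^ b * h s) ^ p else 0) t s
          = ∫⁻ t in Ioo (0:ℝ) T, (Ioi s).indicator
              (fun t => ENNReal.ofReal (min 1 ((t - s) ^ (-ℓ))) *
                ENNReal.ofReal (Real.sqrt (1 + s ^ 2) ^ b * h s) ^ p) t :=
            lintegral_congr hind
        _ = ∫⁻ t in Ioi s, (ENNReal.ofReal (min 1 ((t - s) ^ (-ℓ))) *
              ENNReal.ofReal (Real.sqrt (1 + s ^ 2) ^ b * h s) ^ p)
              ∂((volume : Measure ℝ).restrict (Ioo (0:ℝ) T)) :=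
            lintegral_indicator measurableSet_Ioi _
        _ = ∫⁻ t in Ioi s ∩ Ioo (0:ℝ) T, ENNReal.ofReal (min 1 ((t - s) ^ (-ℓ))) *
              ENNReal.ofReal (Real.sqrt (1 + s ^ 2) ^ b * h s) ^ p := by
            rw [Measure.restrict_restrict measurableSet_Ioi]
        _ = ∫⁻ t in Ioo s T, ENNReal.ofReal (min 1 ((t - s) ^ (-ℓ))) *
              ENNReal.ofReal (Real.sqrt (1 + s ^ 2) ^ b * h s) ^ p := by rw [hset]
        _ = (∫⁻ t in Ioo s T, ENNReal.ofReal (min 1 ((t - s) ^ (-ℓ)))) *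
              ENNReal.ofReal (Real.sqrt (1 + s ^ 2) ^ b * h s) ^ p :=
            lintegral_mul_const' _ _ (hfp s)
        _ ≤ _ := mul_le_mul_left (kernel_trans s T) _
    calc ∫⁻ t in Ioo (0:ℝ) T, ∫⁻ s in Ioo (0:ℝ) t,
            ENNReal.ofReal (min 1 ((t - s) ^ (-ℓ))) *
              ENNReal.ofReal (Real.sqrt (1 + s ^ 2) ^ b * h s) ^ p
        = ∫⁻ t in Ioo (0:ℝ) T, ∫⁻ s in Ioo (0:ℝ) T, (fun t s : ℝ =>
            if s < t then ENNReal.ofReal (min 1 ((t - s) ^ (-ℓ))) *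
              ENNReal.ofReal (Real.sqrt (1 + s ^ 2) ^ b * h s) ^ p else 0) t s :=
          setLIntegral_congr_fun measurableSet_Ioo e1
      _ = ∫⁻ s in Ioo (0:ℝ) T, ∫⁻ t in Ioo (0:ℝ) T, (fun t s : ℝ =>
            if s < t then ENNReal.ofReal (min 1 ((t - s) ^ (-ℓ))) *
              ENNReal.ofReal (Real.sqrt (1 + s ^ 2) ^ b * h s) ^ p else 0) t s :=
          lintegral_lintegral_swap hDm.aemeasurable
      _ ≤ ∫⁻ s in Ioo (0:ℝ) T, (∫⁻ u in Ioi (0:ℝ), ENNReal.ofReal (min 1 (u ^ (-ℓ)))) *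
            ENNReal.ofReal (Real.sqrt (1 + s ^ 2) ^ b * h s) ^ p :=
          setLIntegral_mono' measurableSet_Ioo e2
      _ = _ := lintegral_const_mul' _ _ hM.ne
  -- bound for the A-part
  have boundA : (∫⁻ t in Ioo (0:ℝ) T,
        (ENNReal.ofReal (Real.sqrt 8 ^ ℓ * Real.sqrt (1 + t ^ 2) ^ (b - ℓ)) *
          ∫⁻ s in Ioo (0:ℝ) T, ENNReal.ofReal (Real.sqrt (1 + s ^ 2) ^ (-b)) *
            ENNReal.ofReal (Real.sqrt (1 + s ^ 2) ^ b * h s)) ^ p) ^ (1 / p)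
      ≤ (∫⁻ t in Ioi (0:ℝ),
            ENNReal.ofReal (Real.sqrt 8 ^ ℓ * Real.sqrt (1 + t ^ 2) ^ (b - ℓ)) ^ p) ^ (1 / p) *
          ((∫⁻ s in Ioi (0:ℝ),
              ENNReal.ofReal (Real.sqrt (1 + s ^ 2) ^ (-b)) ^ (p / (p - 1))) ^ (1 / (p / (p - 1))) *
            (∫⁻ t in Ioo (0:ℝ) T,
              ENNReal.ofReal (Real.sqrt (1 + t ^ 2) ^ b * h t) ^ p) ^ (1 / p)) := by
    calc (∫⁻ t in Ioo (0:ℝ) T,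
          (ENNReal.ofReal (Real.sqrt 8 ^ ℓ * Real.sqrt (1 + t ^ 2) ^ (b - ℓ)) *
            ∫⁻ s in Ioo (0:ℝ) T, ENNReal.ofReal (Real.sqrt (1 + s ^ 2) ^ (-b)) *
              ENNReal.ofReal (Real.sqrt (1 + s ^ 2) ^ b * h s)) ^ p) ^ (1 / p)
        = ((∫⁻ t in Ioo (0:ℝ) T,
              ENNReal.ofReal (Real.sqrt 8 ^ ℓ * Real.sqrt (1 + t ^ 2) ^ (b - ℓ)) ^ p) *
            (∫⁻ s in Ioo (0:ℝ) T, ENNReal.ofReal (Real.sqrt (1 + s ^ 2) ^ (-b)) *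
              ENNReal.ofReal (Real.sqrt (1 + s ^ 2) ^ b * h s)) ^ p) ^ (1 / p) := by
          rw [lintegral_congr (fun t => ENNReal.mul_rpow_of_nonneg _ _ hp0.le),
            lintegral_mul_const _ (by fun_prop)]
      _ = (∫⁻ t in Ioo (0:ℝ) T,
              ENNReal.ofReal (Real.sqrt 8 ^ ℓ * Real.sqrt (1 + t ^ 2) ^ (b - ℓ)) ^ p) ^ (1 / p) *
            (∫⁻ s in Ioo (0:ℝ) T, ENNReal.ofReal (Real.sqrt (1 + s ^ 2) ^ (-b)) *
              ENNReal.ofReal (Real.sqrt (1 + s ^ 2) ^ b * h s)) := by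
          rw [ENNReal.mul_rpow_of_nonneg _ _ hppos.le, ← ENNReal.rpow_mul,
            mul_one_div_cancel hp0.ne', ENNReal.rpow_one]
      _ ≤ _ := by
          refine mul_le_mul' (ENNReal.rpow_le_rpow
            (lintegral_mono_set Ioo_subset_Ioi_self) hppos.le) hJ
  -- bound for the B-part
  have step1 : ∫⁻ t in Ioo (0:ℝ) T,
        (ENNReal.ofReal (2 ^ b) *
          ∫⁻ s in Ioo (0:ℝ) t, ENNReal.ofReal (min 1 ((t - s) ^ (-ℓ))) *
            ENNReal.ofReal (Real.sqrt (1 + s ^ 2) ^ b * h s)) ^ p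
      ≤ ENNReal.ofReal (2 ^ b) ^ p *
          ((∫⁻ u in Ioi (0:ℝ), ENNReal.ofReal (min 1 (u ^ (-ℓ)))) ^ (1 / (p / (p - 1)) * p) *
            ((∫⁻ u in Ioi (0:ℝ), ENNReal.ofReal (min 1 (u ^ (-ℓ)))) *
              ∫⁻ t in Ioo (0:ℝ) T,
                ENNReal.ofReal (Real.sqrt (1 + t ^ 2) ^ b * h t) ^ p)) := by
    calc ∫⁻ t in Ioo (0:ℝ) T,
          (ENNReal.ofReal (2 ^ b) *
            ∫⁻ s in Ioo (0:ℝ) t, ENNReal.ofReal (min 1 ((t - s) ^ (-ℓ))) *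
              ENNReal.ofReal (Real.sqrt (1 + s ^ 2) ^ b * h s)) ^ p
        ≤ ∫⁻ t in Ioo (0:ℝ) T, ENNReal.ofReal (2 ^ b) ^ p *
            ((∫⁻ u in Ioi (0:ℝ), ENNReal.ofReal (min 1 (u ^ (-ℓ)))) ^ (1 / (p / (p - 1)) * p) *
              ∫⁻ s in Ioo (0:ℝ) t, ENNReal.ofReal (min 1 ((t - s) ^ (-ℓ))) *
                ENNReal.ofReal (Real.sqrt (1 + s ^ 2) ^ b * h s) ^ p) :=
          setLIntegral_mono' measurableSet_Ioo (fun t _ => by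
            rw [ENNReal.mul_rpow_of_nonneg _ _ hp0.le]
            exact mul_le_mul_right (pointB t) _)
      _ = ENNReal.ofReal (2 ^ b) ^ p *
            ((∫⁻ u in Ioi (0:ℝ), ENNReal.ofReal (min 1 (u ^ (-ℓ)))) ^ (1 / (p / (p - 1)) * p) *
              ∫⁻ t in Ioo (0:ℝ) T, ∫⁻ s in Ioo (0:ℝ) t,
                ENNReal.ofReal (min 1 ((t - s) ^ (-ℓ))) *
                  ENNReal.ofReal (Real.sqrt (1 + s ^ 2) ^ b * h s) ^ p) := by
          rw [lintegral_const_mul' _ _ (ENNReal.rpow_lt_top_of_nonneg hp0.le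
              ENNReal.ofReal_ne_top).ne,
            lintegral_const_mul' _ _ (ENNReal.rpow_lt_top_of_nonneg (by positivity) hM.ne).ne]
      _ ≤ _ := by
          exact mul_le_mul_right (mul_le_mul_right fub _) _
  have boundB : (∫⁻ t in Ioo (0:ℝ) T,
        (ENNReal.ofReal (2 ^ b) *
          ∫⁻ s in Ioo (0:ℝ) t, ENNReal.ofReal (min 1 ((t - s) ^ (-ℓ))) *
            ENNReal.ofReal (Real.sqrt (1 + s ^ 2) ^ b * h s)) ^ p) ^ (1 / p)
      ≤ ENNReal.ofReal (2 ^ b) *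
          ((∫⁻ u in Ioi (0:ℝ), ENNReal.ofReal (min 1 (u ^ (-ℓ)))) ^ (1 / (p / (p - 1))) *
            (∫⁻ u in Ioi (0:ℝ), ENNReal.ofReal (min 1 (u ^ (-ℓ)))) ^ (1 / p)) *
          (∫⁻ t in Ioo (0:ℝ) T,
            ENNReal.ofReal (Real.sqrt (1 + t ^ 2) ^ b * h t) ^ p) ^ (1 / p) := by
    refine le_trans (ENNReal.rpow_le_rpow step1 hppos.le) (le_of_eq ?_)
    rw [ENNReal.mul_rpow_of_nonneg _ _ hppos.le, ENNReal.mul_rpow_of_nonneg _ _ hppos.le,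
      ENNReal.mul_rpow_of_nonneg _ _ hppos.le, ← ENNReal.rpow_mul, ← ENNReal.rpow_mul,
      mul_one_div_cancel hp0.ne', ENNReal.rpow_one,
      show 1 / (p / (p - 1)) * p * (1 / p) = 1 / (p / (p - 1)) by
        rw [mul_assoc, mul_one_div_cancel hp0.ne', mul_one]]
    ring
  -- assemble
  calc (∫⁻ t in Ioo (0:ℝ) T,
        (ENNReal.ofReal (Real.sqrt (1 + t ^ 2) ^ b) *
          ∫⁻ s in Ioo (0:ℝ) t,
            ENNReal.ofReal (min 1 ((t - s) ^ (-ℓ)) * h s)) ^ p) ^ (1 / p)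
      ≤ (∫⁻ t in Ioo (0:ℝ) T,
          ((fun t => ENNReal.ofReal (Real.sqrt 8 ^ ℓ * Real.sqrt (1 + t ^ 2) ^ (b - ℓ)) *
              ∫⁻ s in Ioo (0:ℝ) T, ENNReal.ofReal (Real.sqrt (1 + s ^ 2) ^ (-b)) *
                ENNReal.ofReal (Real.sqrt (1 + s ^ 2) ^ b * h s))
            + fun t => ENNReal.ofReal (2 ^ b) *
              ∫⁻ s in Ioo (0:ℝ) t, ENNReal.ofReal (min 1 ((t - s) ^ (-ℓ))) *
                ENNReal.ofReal (Real.sqrt (1 + s ^ 2) ^ b * h s)) t ^ p) ^ (1 / p) := by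
        refine ENNReal.rpow_le_rpow (setLIntegral_mono' measurableSet_Ioo fun t ht =>
          ENNReal.rpow_le_rpow ?_ hp0.le) hppos.le
        simpa [Pi.add_apply] using key t ht
    _ ≤ (∫⁻ t in Ioo (0:ℝ) T,
          (ENNReal.ofReal (Real.sqrt 8 ^ ℓ * Real.sqrt (1 + t ^ 2) ^ (b - ℓ)) *
            ∫⁻ s in Ioo (0:ℝ) T, ENNReal.ofReal (Real.sqrt (1 + s ^ 2) ^ (-b)) *
              ENNReal.ofReal (Real.sqrt (1 + s ^ 2) ^ b * h s)) ^ p) ^ (1 / p)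
        + (∫⁻ t in Ioo (0:ℝ) T,
            (ENNReal.ofReal (2 ^ b) *
              ∫⁻ s in Ioo (0:ℝ) t, ENNReal.ofReal (min 1 ((t - s) ^ (-ℓ))) *
                ENNReal.ofReal (Real.sqrt (1 + s ^ 2) ^ b * h s)) ^ p) ^ (1 / p) := by
        exact ENNReal.lintegral_Lp_add_le
          (by fun_prop)
          ((meas_param hfm ℓ).const_mul _).aemeasurable hp.le
    _ ≤ ((∫⁻ t in Ioi (0:ℝ),
            ENNReal.ofReal (Real.sqrt 8 ^ ℓ * Real.sqrt (1 + t ^ 2) ^ (b - ℓ)) ^ p) ^ (1 / p) *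
          ((∫⁻ s in Ioi (0:ℝ),
              ENNReal.ofReal (Real.sqrt (1 + s ^ 2) ^ (-b)) ^ (p / (p - 1))) ^ (1 / (p / (p - 1))) *
            (∫⁻ t in Ioo (0:ℝ) T,
              ENNReal.ofReal (Real.sqrt (1 + t ^ 2) ^ b * h t) ^ p) ^ (1 / p)))
        + ENNReal.ofReal (2 ^ b) *
            ((∫⁻ u in Ioi (0:ℝ), ENNReal.ofReal (min 1 (u ^ (-ℓ)))) ^ (1 / (p / (p - 1))) *
              (∫⁻ u in Ioi (0:ℝ), ENNReal.ofReal (min 1 (u ^ (-ℓ)))) ^ (1 / p)) *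
            (∫⁻ t in Ioo (0:ℝ) T,
              ENNReal.ofReal (Real.sqrt (1 + t ^ 2) ^ b * h t) ^ p) ^ (1 / p) :=
        add_le_add boundA boundB
    _ = E * (∫⁻ t in Ioo (0:ℝ) T,
          ENNReal.ofReal (Real.sqrt (1 + t ^ 2) ^ b * h t) ^ p) ^ (1 / p) := by
        rw [hEdef]; ring
    _ ≤ ENNReal.ofReal (E.toReal + 1) * (∫⁻ t in Ioo (0:ℝ) T,
          ENNReal.ofReal (Real.sqrt (1 + t ^ 2) ^ b * h t) ^ p) ^ (1 / p) := by
        refine mul_le_mul_left ?_ _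
        calc E = ENNReal.ofReal E.toReal := (ENNReal.ofReal_toReal hE.ne).symm
          _ ≤ ENNReal.ofReal (E.toReal + 1) := ENNReal.ofReal_le_ofReal (by linarith)
end
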